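/- arXiv:0907.3275 — 5 statements merged into one kernel-verified Lean document; each statement's English description precedes it below -/
import Mathlib

section
/- Let q > 0 and let f : ℝ → ℝ be weakly increasing (a < b implies f(a) ≤ f(b)). If P is a q-exchangeable Borel probability measure on ℝ^ℕ, then the pushforward of P under the coordinatewise map f^∞ : ℝ^ℕ → ℝ^ℕ, (w_1, w_2, ...) ↦ (f(w_1), f(w_2), ...), is again q-exchangeable. -/
open MeasureTheory

/-- The map on sequences that swaps coordinates `i` and `i+1`. -/
def swapCoord {α : Type*} (i : ℕ) (w : ℕ → α) : ℕ → α :=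
  fun j => if j = i then w (i + 1) else if j = i + 1 then w i else w j

/-- A Borel probability measure `P` on `ℝ^ℕ` is `q`-exchangeable if for every `i` the
pushforward of `P` under the swap of coordinates `i` and `i+1` equals the measure with
density `w ↦ q ^ sgn (w (i+1) - w i)` with respect to `P`. -/
def IsQExchangeable (q : ℝ) (P : Measure (ℕ → ℝ)) : Prop :=
  ∀ i : ℕ, P.map (swapCoord i) =
    P.withDensity (fun w => ENNReal.ofReal (q ^ ((SignType.sign (w (i + 1) - w i)) : ℤ)))

lemma swapCoord_measurable (i : ℕ) : Measurable (swapCoord i : (ℕ → ℝ) → (ℕ → ℝ)) := by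
  apply measurable_pi_lambda
  intro j
  unfold swapCoord
  split_ifs <;> exact measurable_pi_apply _

lemma density_ite (q : ℝ) (hq : 0 < q) (a : ℝ) :
    ENNReal.ofReal (q ^ ((SignType.sign a) : ℤ)) =
      if 0 < a then ENNReal.ofReal q else if a < 0 then (ENNReal.ofReal q)⁻¹ else 1 := by
  rcases lt_trichotomy a 0 with h | h | h
  · simp [sign_neg h, not_lt.2 h.le, h, zpow_neg, ENNReal.ofReal_inv_of_pos hq]
  · simp [h]
  · simp [sign_pos h, h]

/-- the coordinatewise application of a weakly increasing function `f : ℝ → ℝ`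
preserves `q`-exchangeability. -/
theorem stmt_1 (q : ℝ) (hq : 0 < q) (f : ℝ → ℝ) (hf : ∀ a b : ℝ, a < b → f a ≤ f b)
    (P : Measure (ℕ → ℝ)) [IsProbabilityMeasure P] (hP : IsQExchangeable q P) :
    IsQExchangeable q (P.map (fun w => f ∘ w)) := by
  have hfm : Monotone f := fun a b hab => hab.lt_or_eq.elim (hf a b) (fun h => by rw [h])
  have hfmeas : Measurable f := hfm.measurable
  set F : (ℕ → ℝ) → (ℕ → ℝ) := fun w => f ∘ w with hFdef
  have hF : Measurable F :=
    measurable_pi_lambda _ fun j => hfmeas.comp (measurable_pi_apply j)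
  intro i
  set g : (ℕ → ℝ) → ENNReal :=
    fun w => ENNReal.ofReal (q ^ ((SignType.sign (w (i + 1) - w i)) : ℤ)) with hgdef
  have hqne : ENNReal.ofReal q ≠ 0 := (ENNReal.ofReal_pos.2 hq).ne'
  have hgite : ∀ w : ℕ → ℝ,
      g w = if w i < w (i + 1) then ENNReal.ofReal q
        else if w (i + 1) < w i then (ENNReal.ofReal q)⁻¹ else 1 := by
    intro w
    have h0 : g w = ENNReal.ofReal (q ^ ((SignType.sign (w (i + 1) - w i)) : ℤ)) := rfl
    rw [h0, density_ite q hq]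
    simp [sub_pos, sub_neg]
  have hgm : Measurable g := by
    have : g = fun w => if w i < w (i + 1) then ENNReal.ofReal q
        else if w (i + 1) < w i then (ENNReal.ofReal q)⁻¹ else 1 := funext hgite
    rw [this]
    exact Measurable.ite
      (measurableSet_lt (measurable_pi_apply i) (measurable_pi_apply (i + 1)))
      measurable_const
      (Measurable.ite
        (measurableSet_lt (measurable_pi_apply (i + 1)) (measurable_pi_apply i))
        measurable_const measurable_const)
  have hPi := hP i
  rw [← hgdef] at hPi
  have hswapm := swapCoord_measurable i
  -- commutation of F and the swap
  have hcomm : ∀ w : ℕ → ℝ, F (swapCoord i w) = swapCoord i (F w) := by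
    intro w; funext j
    simp only [hFdef, Function.comp, swapCoord]
    split_ifs <;> rfl
  ext A hA
  set B : Set (ℕ → ℝ) := F ⁻¹' A with hBdef
  have hBm : MeasurableSet B := hF hA
  -- discrepancy sets
  set Dp : Set (ℕ → ℝ) := {w | w i < w (i + 1) ∧ f (w (i + 1)) = f (w i)} with hDpdef
  set Dm : Set (ℕ → ℝ) := {w | w (i + 1) < w i ∧ f (w (i + 1)) = f (w i)} with hDmdef
  have hDpm : MeasurableSet Dp :=
    (measurableSet_lt (measurable_pi_apply i) (measurable_pi_apply (i + 1))).inter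
      (measurableSet_eq_fun (hfmeas.comp (measurable_pi_apply (i + 1)))
        (hfmeas.comp (measurable_pi_apply i)))
  have hDmm : MeasurableSet Dm :=
    (measurableSet_lt (measurable_pi_apply (i + 1)) (measurable_pi_apply i)).inter
      (measurableSet_eq_fun (hfmeas.comp (measurable_pi_apply (i + 1)))
        (hfmeas.comp (measurable_pi_apply i)))
  -- if f collapses the two coordinates, F w is fixed by the swap
  have hfix : ∀ w : ℕ → ℝ, f (w (i + 1)) = f (w i) → swapCoord i (F w) = F w := by
    intro w hw; funext j
    simp only [swapCoord, hFdef, Function.comp]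
    split_ifs with h1 h2
    · rw [h1, hw]
    · rw [h2, ← hw]
    · rfl
  -- key measure identity : P (B ∩ Dm) = q * P (B ∩ Dp)
  have hsw_i : ∀ w : ℕ → ℝ, swapCoord i w i = w (i + 1) := fun w => by simp [swapCoord]
  have hsw_i1 : ∀ w : ℕ → ℝ, swapCoord i w (i + 1) = w i := fun w => by simp [swapCoord]
  have hswappre : swapCoord i ⁻¹' (B ∩ Dp) = B ∩ Dm := by
    ext w
    constructor
    · rintro ⟨hwB, hlt, heq⟩
      rw [hsw_i, hsw_i1] at hlt heq
      refine ⟨?_, hlt, heq.symm⟩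
      have hFs : F (swapCoord i w) = F w := by rw [hcomm w, hfix w heq.symm]
      have h2 : F (swapCoord i w) ∈ A := hwB
      rw [hFs] at h2
      exact h2
    · rintro ⟨hwB, hlt, heq⟩
      have hFs : F (swapCoord i w) = F w := by rw [hcomm w, hfix w heq]
      refine ⟨?_, ?_, ?_⟩
      · show F (swapCoord i w) ∈ A
        rw [hFs]; exact hwB
      · rw [hsw_i, hsw_i1]; exact hlt
      · rw [hsw_i, hsw_i1]; exact heq.symm
  have hkey : P (B ∩ Dm) = ENNReal.ofReal q * P (B ∩ Dp) := by
    have h1 : (P.map (swapCoord i)) (B ∩ Dp) = (P.withDensity g) (B ∩ Dp) := by rw [hPi]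
    rw [Measure.map_apply hswapm (hBm.inter hDpm), hswappre,
      withDensity_apply _ (hBm.inter hDpm)] at h1
    rw [h1]
    have : ∫⁻ w in B ∩ Dp, g w ∂P = ∫⁻ _ in B ∩ Dp, ENNReal.ofReal q ∂P := by
      apply setLIntegral_congr_fun_ae (hBm.inter hDpm)
      exact ae_of_all _ fun w hw => by rw [hgite w, if_pos hw.2.1]
    rw [this, setLIntegral_const]
  -- values of g ∘ F
  have hgF : ∀ w : ℕ → ℝ, g (F w) =
      if f (w i) < f (w (i + 1)) then ENNReal.ofReal q
        else if f (w (i + 1)) < f (w i) then (ENNReal.ofReal q)⁻¹ else 1 := by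
    intro w; rw [hgite (F w)]; rfl
  have hgFone : ∀ w : ℕ → ℝ, f (w (i + 1)) = f (w i) → g (F w) = 1 := by
    intro w hw
    rw [hgF w, if_neg (by rw [hw]; exact lt_irrefl _), if_neg (by rw [hw]; exact lt_irrefl _)]
  have hE : ∀ w : ℕ → ℝ, w ∉ Dp ∪ Dm → g (F w) = g w := by
    intro w hw
    simp only [Set.mem_union, hDpdef, hDmdef, Set.mem_setOf_eq, not_or, not_and] at hw
    rcases lt_trichotomy (w i) (w (i + 1)) with h | h | h
    · have hne : f (w (i + 1)) ≠ f (w i) := hw.1 h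
      have hlt : f (w i) < f (w (i + 1)) := lt_of_le_of_ne (hf _ _ h) (Ne.symm hne)
      rw [hgF w, hgite w, if_pos hlt, if_pos h]
    · rw [hgFone w (by rw [h]), hgite w, if_neg (by rw [h]; exact lt_irrefl _),
        if_neg (by rw [h]; exact lt_irrefl _)]
    · have hne : f (w (i + 1)) ≠ f (w i) := hw.2 h
      have hlt : f (w (i + 1)) < f (w i) := lt_of_le_of_ne (hf _ _ h) hne
      rw [hgF w, hgite w, if_neg (not_lt.2 hlt.le), if_pos hlt,
        if_neg (not_lt.2 h.le), if_pos h]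
  -- rewrite both sides as integrals over B against P
  rw [Measure.map_apply hswapm hA, Measure.map_apply hF (hswapm hA),
    withDensity_apply _ hA, setLIntegral_map hA hgm hF]
  have hpre : F ⁻¹' (swapCoord i ⁻¹' A) = swapCoord i ⁻¹' B := by
    ext w
    simp only [Set.mem_preimage, hBdef, hcomm w]
  rw [hpre, ← Measure.map_apply hswapm hBm, hPi, withDensity_apply _ hBm]
  -- split the integrals
  have hdisj1 : Disjoint (B ∩ Dp) (B ∩ Dm) := by
    rw [Set.disjoint_left]
    rintro w ⟨-, hlt, -⟩ ⟨-, hlt', -⟩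
    exact lt_asymm hlt hlt'
  have hBeq : B = (B \ (Dp ∪ Dm)) ∪ ((B ∩ Dp) ∪ (B ∩ Dm)) := by
    rw [← Set.inter_union_distrib_left, Set.diff_union_inter]
  have hdisj2 : Disjoint (B \ (Dp ∪ Dm)) ((B ∩ Dp) ∪ (B ∩ Dm)) := by
    rw [Set.disjoint_left]
    rintro w ⟨-, hw⟩ hw'
    rcases hw' with ⟨-, hw'⟩ | ⟨-, hw'⟩
    · exact hw (Or.inl hw')
    · exact hw (Or.inr hw')
  have hsplit : ∀ h : (ℕ → ℝ) → ENNReal,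
      ∫⁻ w in B, h w ∂P = ∫⁻ w in B \ (Dp ∪ Dm), h w ∂P
        + (∫⁻ w in B ∩ Dp, h w ∂P + ∫⁻ w in B ∩ Dm, h w ∂P) := by
    intro h
    conv_lhs => rw [hBeq]
    rw [lintegral_union (((hBm.inter hDpm).union (hBm.inter hDmm))) hdisj2,
      lintegral_union (hBm.inter hDmm) hdisj1]
  rw [hsplit g, hsplit (fun w => g (F w))]
  have hEint : ∫⁻ w in B \ (Dp ∪ Dm), g w ∂P = ∫⁻ w in B \ (Dp ∪ Dm), g (F w) ∂P := by
    apply setLIntegral_congr_fun_ae (hBm.diff (hDpm.union hDmm))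
    exact ae_of_all _ fun w hw => (hE w hw.2).symm
  rw [hEint]
  congr 1
  -- compute the four remaining integrals
  have hp : ∫⁻ w in B ∩ Dp, g w ∂P = ENNReal.ofReal q * P (B ∩ Dp) := by
    rw [show ∫⁻ w in B ∩ Dp, g w ∂P = ∫⁻ _ in B ∩ Dp, ENNReal.ofReal q ∂P from
      setLIntegral_congr_fun_ae (hBm.inter hDpm)
        (ae_of_all _ fun w hw => by rw [hgite w, if_pos hw.2.1]), setLIntegral_const]
  have hm : ∫⁻ w in B ∩ Dm, g w ∂P = (ENNReal.ofReal q)⁻¹ * P (B ∩ Dm) := by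
    rw [show ∫⁻ w in B ∩ Dm, g w ∂P = ∫⁻ _ in B ∩ Dm, (ENNReal.ofReal q)⁻¹ ∂P from
      setLIntegral_congr_fun_ae (hBm.inter hDmm)
        (ae_of_all _ fun w hw => by
          rw [hgite w, if_neg (not_lt.2 hw.2.1.le), if_pos hw.2.1]), setLIntegral_const]
  have hpF : ∫⁻ w in B ∩ Dp, g (F w) ∂P = P (B ∩ Dp) := by
    rw [show ∫⁻ w in B ∩ Dp, g (F w) ∂P = ∫⁻ _ in B ∩ Dp, 1 ∂P from
      setLIntegral_congr_fun_ae (hBm.inter hDpm)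
        (ae_of_all _ fun w hw => hgFone w hw.2.2), setLIntegral_const, one_mul]
  have hmF : ∫⁻ w in B ∩ Dm, g (F w) ∂P = P (B ∩ Dm) := by
    rw [show ∫⁻ w in B ∩ Dm, g (F w) ∂P = ∫⁻ _ in B ∩ Dm, 1 ∂P from
      setLIntegral_congr_fun_ae (hBm.inter hDmm)
        (ae_of_all _ fun w hw => hgFone w hw.2.2), setLIntegral_const, one_mul]
  rw [hp, hm, hpF, hmF, hkey, ← mul_assoc,
    ENNReal.inv_mul_cancel hqne ENNReal.ofReal_ne_top, one_mul, add_comm]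
end

section
/- Let q > 0, let A and B be finite subsets of ℝ, and let f : A → B be weakly increasing (a < b implies f(a) ≤ f(b)). If P is a finitely q-exchangeable probability measure on A^n, then the pushforward of P under the coordinatewise map f^n : A^n → B^n, (w_1, ..., w_n) ↦ (f(w_1), ..., f(w_n)), is finitely q-exchangeable on B^n. -/
open MeasureTheory

/-- The map on words of length `n` that swaps coordinates `a` and `b`. -/
def finSwap {α : Type*} {n : ℕ} (a b : Fin n) (w : Fin n → α) : Fin n → α :=
  fun j => if j = a then w b else if j = b then w a else w j

/-- Finite `q`-exchangeability for a probability measure on `A^n`, `A ⊆ ℝ`. -/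
def IsFinQExchangeableOn (q : ℝ) (A : Set ℝ) {n : ℕ} (P : Measure (Fin n → A)) : Prop :=
  ∀ (i : ℕ) (h : i + 1 < n),
    P.map (finSwap ⟨i, Nat.lt_of_succ_lt h⟩ ⟨i + 1, h⟩) =
      P.withDensity (fun u => ENNReal.ofReal
        (q ^ ((SignType.sign ((u ⟨i + 1, h⟩ : ℝ) - (u ⟨i, Nat.lt_of_succ_lt h⟩ : ℝ))) : ℤ)))

lemma map_withDensity_aux {α β : Type*} [MeasurableSpace α] [MeasurableSpace β]
    (μ : Measure α) (F : α → β) (hF : Measurable F) (g : β → ENNReal) (hg : Measurable g) :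
    (μ.map F).withDensity g = (μ.withDensity (fun x => g (F x))).map F := by
  ext s hs
  rw [withDensity_apply _ hs, Measure.map_apply hF hs, withDensity_apply _ (hF hs),
      setLIntegral_map hs hg hF]

/-- for finite alphabets `A, B ⊆ ℝ` and a weakly increasing `f : A → B`,
the coordinatewise map `f^n` preserves finite `q`-exchangeability. -/
theorem stmt_3 (q : ℝ) (hq : 0 < q) (n : ℕ) (A B : Set ℝ) (hA : A.Finite) (hB : B.Finite)
    (f : A → B) (hf : ∀ a b : A, (a : ℝ) < (b : ℝ) → (f a : ℝ) ≤ (f b : ℝ))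
    (P : Measure (Fin n → A)) [IsProbabilityMeasure P]
    (hP : IsFinQExchangeableOn q A P) :
    IsFinQExchangeableOn q B (P.map (fun w => f ∘ w)) := by
  haveI : Finite ↥A := hA.to_subtype
  haveI : Finite ↥B := hB.to_subtype
  intro i hi
  set i₀ : Fin n := ⟨i, Nat.lt_of_succ_lt hi⟩ with hi₀
  set i₁ : Fin n := ⟨i + 1, hi⟩ with hi₁
  have hne : i₁ ≠ i₀ := by simp [hi₀, hi₁, Fin.ext_iff]
  set F : (Fin n → A) → (Fin n → B) := fun w => f ∘ w with hFdef
  set gB : (Fin n → B) → ENNReal := fun u => ENNReal.ofReal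
      (q ^ ((SignType.sign ((u i₁ : ℝ) - (u i₀ : ℝ))) : ℤ)) with hgBdef
  set gA : (Fin n → A) → ENNReal := fun u => ENNReal.ofReal
      (q ^ ((SignType.sign ((u i₁ : ℝ) - (u i₀ : ℝ))) : ℤ)) with hgAdef
  have hmF : Measurable F := Measurable.of_discrete
  have hms : ∀ (X : Set (Fin n → A)), MeasurableSet X := fun _ => .of_discrete
  have hswap_comm : ∀ w : Fin n → A, F (finSwap i₀ i₁ w) = finSwap i₀ i₁ (F w) := by
    intro w; funext j
    simp only [hFdef, finSwap, Function.comp_apply]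
    split_ifs <;> rfl
  have hLHS : (P.map F).map (finSwap i₀ i₁) = (P.withDensity gA).map F := by
    rw [Measure.map_map Measurable.of_discrete hmF,
        show (finSwap i₀ i₁ ∘ F) = F ∘ (finSwap i₀ i₁) from funext fun w => (hswap_comm w).symm,
        ← Measure.map_map hmF Measurable.of_discrete, hP i hi]
  rw [hLHS, map_withDensity_aux _ _ hmF _ Measurable.of_discrete]
  -- Now prove the two withDensity measures have equal pushforwards.
  ext s hs
  rw [Measure.map_apply hmF hs, Measure.map_apply hmF hs,
      withDensity_apply _ (hmF hs), withDensity_apply _ (hmF hs)]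
  set T : Set (Fin n → A) := F ⁻¹' s with hTdef
  set Ep : Set (Fin n → A) :=
    {u | u ∈ T ∧ ((f (u i₁) : ℝ) = f (u i₀)) ∧ (u i₀ : ℝ) < u i₁} with hEpdef
  set En : Set (Fin n → A) :=
    {u | u ∈ T ∧ ((f (u i₁) : ℝ) = f (u i₀)) ∧ (u i₁ : ℝ) < u i₀} with hEndef
  have hsub : Ep ∪ En ⊆ T := by
    rintro u (⟨hu, -, -⟩ | ⟨hu, -, -⟩) <;> exact hu
  have hdisj : Disjoint Ep En := by
    rw [Set.disjoint_left]
    rintro u ⟨-, -, h1⟩ ⟨-, -, h2⟩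
    exact absurd h1 (not_lt.2 h2.le)
  have hTdecomp : T = (T \ (Ep ∪ En)) ∪ (Ep ∪ En) := (Set.diff_union_of_subset hsub).symm
  -- values of the densities on the pieces
  have hgA_pos : ∀ u ∈ Ep, gA u = ENNReal.ofReal q := by
    rintro u ⟨-, -, hlt⟩
    simp only [hgAdef]
    rw [show SignType.sign ((u i₁ : ℝ) - (u i₀ : ℝ)) = 1 from sign_pos (by linarith)]
    norm_num
  have hgA_neg : ∀ u ∈ En, gA u = ENNReal.ofReal q⁻¹ := by
    rintro u ⟨-, -, hlt⟩
    simp only [hgAdef]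
    rw [show SignType.sign ((u i₁ : ℝ) - (u i₀ : ℝ)) = -1 from sign_neg (by linarith)]
    norm_num
  have hgB_one : ∀ u : Fin n → A, ((f (u i₁) : ℝ) = f (u i₀)) → gB (F u) = 1 := by
    intro u heq
    simp only [hgBdef, hFdef, Function.comp_apply]
    rw [show ((f (u i₁) : ℝ) - (f (u i₀) : ℝ)) = 0 by rw [heq]; ring]
    norm_num
  have hD : ∀ u ∈ T \ (Ep ∪ En), gA u = gB (F u) := by
    rintro u ⟨huT, hu⟩
    simp only [Set.mem_union, hEpdef, hEndef, Set.mem_setOf_eq, not_or, not_and] at hu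
    obtain ⟨h1, h2⟩ := hu
    rcases lt_trichotomy ((u i₀ : ℝ)) ((u i₁ : ℝ)) with hlt | heq | hgt
    · have hne' : (f (u i₁) : ℝ) ≠ f (u i₀) := fun h => (h1 huT h) hlt
      have hle : (f (u i₀) : ℝ) ≤ f (u i₁) := hf _ _ hlt
      have hfl : (f (u i₀) : ℝ) < f (u i₁) := lt_of_le_of_ne hle fun h => hne' h.symm
      simp only [hgAdef, hgBdef, hFdef, Function.comp_apply]
      rw [sign_pos (by linarith : (0:ℝ) < (u i₁ : ℝ) - (u i₀ : ℝ)),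
          sign_pos (by linarith : (0:ℝ) < ((f (u i₁)) : ℝ) - ((f (u i₀)) : ℝ))]
    · have hval : u i₀ = u i₁ := Subtype.ext heq
      simp only [hgAdef, hgBdef, hFdef, Function.comp_apply, hval, sub_self, sign_zero]
    · have hne' : (f (u i₁) : ℝ) ≠ f (u i₀) := fun h => (h2 huT h) hgt
      have hle : (f (u i₁) : ℝ) ≤ f (u i₀) := hf _ _ hgt
      have hfl : (f (u i₁) : ℝ) < f (u i₀) := lt_of_le_of_ne hle hne'
      simp only [hgAdef, hgBdef, hFdef, Function.comp_apply]
      rw [sign_neg (by linarith : (u i₁ : ℝ) - (u i₀ : ℝ) < 0),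
          sign_neg (by linarith : ((f (u i₁)) : ℝ) - ((f (u i₀)) : ℝ) < 0)]
  -- swap facts
  have hswap_at : ∀ w : Fin n → A, finSwap i₀ i₁ w i₀ = w i₁ ∧ finSwap i₀ i₁ w i₁ = w i₀ := by
    intro w
    constructor
    · simp [finSwap]
    · simp [finSwap, hne]
  have hFfix : ∀ w : Fin n → A, ((f (w i₁) : ℝ) = f (w i₀)) → F (finSwap i₀ i₁ w) = F w := by
    intro w hw; funext j
    simp only [hFdef, Function.comp_apply, finSwap]
    split_ifs with h1 h2
    · subst h1; exact Subtype.ext hw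
    · subst h2; exact (Subtype.ext hw).symm
    · rfl
  have hkeyT : ∀ u : Fin n → A, ((f (u i₁) : ℝ) = f (u i₀)) →
      (finSwap i₀ i₁ u ∈ T ↔ u ∈ T) := by
    intro u hu
    simp only [hTdef, Set.mem_preimage, hFfix u hu]
  have hpre : finSwap i₀ i₁ ⁻¹' Ep = En := by
    ext u
    obtain ⟨h0, h1⟩ := hswap_at u
    simp only [Set.mem_preimage, hEpdef, hEndef, Set.mem_setOf_eq, h0, h1]
    constructor
    · rintro ⟨hT, heq, hlt⟩
      exact ⟨(hkeyT u heq.symm).1 hT, heq.symm, hlt⟩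
    · rintro ⟨hT, heq, hlt⟩
      exact ⟨(hkeyT u heq).2 hT, heq.symm, hlt⟩
  have hEn_eq : P En = ENNReal.ofReal q * P Ep := by
    have h2 : P.map (finSwap i₀ i₁) Ep = (P.withDensity gA) Ep := by rw [hP i hi]
    rw [Measure.map_apply Measurable.of_discrete (hms _), withDensity_apply _ (hms _),
        hpre, setLIntegral_congr_fun (hms _) hgA_pos, setLIntegral_const] at h2
    exact h2
  -- assemble
  have eD : ∫⁻ u in T \ (Ep ∪ En), gA u ∂P = ∫⁻ u in T \ (Ep ∪ En), gB (F u) ∂P :=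
    setLIntegral_congr_fun (hms _) hD
  have ep1 : ∫⁻ u in Ep, gA u ∂P = ENNReal.ofReal q * P Ep := by
    rw [setLIntegral_congr_fun (hms _) hgA_pos, setLIntegral_const]
  have en1 : ∫⁻ u in En, gA u ∂P = ENNReal.ofReal q⁻¹ * P En := by
    rw [setLIntegral_congr_fun (hms _) hgA_neg, setLIntegral_const]
  have ep2 : ∫⁻ u in Ep, gB (F u) ∂P = P Ep := by
    rw [setLIntegral_congr_fun (hms _)
        (fun u (hu : u ∈ Ep) => hgB_one u hu.2.1), setLIntegral_const, one_mul]
  have en2 : ∫⁻ u in En, gB (F u) ∂P = P En := by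
    rw [setLIntegral_congr_fun (hms _)
        (fun u (hu : u ∈ En) => hgB_one u hu.2.1), setLIntegral_const, one_mul]
  rw [hTdecomp, lintegral_union (hms _) Set.disjoint_sdiff_left,
      lintegral_union (hms _) Set.disjoint_sdiff_left,
      lintegral_union (hms _) hdisj, lintegral_union (hms _) hdisj,
      eD, ep1, en1, ep2, en2, hEn_eq, ← mul_assoc,
      ← ENNReal.ofReal_mul (le_of_lt (inv_pos.2 hq)), inv_mul_cancel₀ hq.ne',
      ENNReal.ofReal_one, one_mul]
  ring
end

section
/- Let q > 0 and let f : ℝ → ℝ be weakly increasing (a < b implies f(a) ≤ f(b)). If P is a q-exchangeable Borel probability measure on ℝ^ℕ that is ergodic, then the pushforward of P under the coordinatewise map f^∞ : ℝ^ℕ → ℝ^ℕ, (w_1, w_2, ...) ↦ (f(w_1), f(w_2), ...), is q-exchangeable and ergodic. -/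
open MeasureTheory ENNReal

/-- `P` is ergodic: every Borel set invariant under all permutations of finitely many
coordinates has measure `0` or `1`. -/
def IsErgodicExchangeable (P : Measure (ℕ → ℝ)) : Prop :=
  ∀ S : Set (ℕ → ℝ), MeasurableSet S →
    (∀ σ : Equiv.Perm ℕ, {j | σ j ≠ j}.Finite → (fun w => w ∘ σ) ⁻¹' S = S) →
    P S = 0 ∨ P S = 1

section aux

lemma measurable_swapCoord (i : ℕ) : Measurable (swapCoord (α := ℝ) i) := by
  refine measurable_pi_lambda _ fun j => ?_
  unfold swapCoord
  split_ifs <;> exact measurable_pi_apply _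

lemma swapCoord_apply_self {α : Type*} (i : ℕ) (w : ℕ → α) :
    swapCoord i w i = w (i + 1) := by simp [swapCoord]

lemma swapCoord_apply_succ {α : Type*} (i : ℕ) (w : ℕ → α) :
    swapCoord i w (i + 1) = w i := by simp [swapCoord]

lemma swapCoord_eq_self {α : Type*} (i : ℕ) (w : ℕ → α) (h : w i = w (i + 1)) :
    swapCoord i w = w := by
  funext j
  unfold swapCoord
  split_ifs with h1 h2 <;> simp_all

lemma swapCoord_comp (f : ℝ → ℝ) (i : ℕ) (w : ℕ → ℝ) :
    f ∘ (swapCoord i w) = swapCoord i (f ∘ w) := by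
  funext j
  unfold swapCoord
  simp only [Function.comp_apply]
  split_ifs <;> rfl

end aux

section key

variable {q : ℝ} (hq : 0 < q) {f : ℝ → ℝ} (hf : ∀ a b : ℝ, a < b → f a ≤ f b)

/-- Rewrite the density function in `ite` form. -/
lemma density_eq (i : ℕ) (w : ℕ → ℝ) :
    ENNReal.ofReal (q ^ ((SignType.sign (w (i + 1) - w i)) : ℤ)) =
      if w i < w (i + 1) then ENNReal.ofReal q
      else if w (i + 1) < w i then ENNReal.ofReal q⁻¹ else 1 := by
  rcases lt_trichotomy (w i) (w (i + 1)) with h | h | h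
  · rw [if_pos h, sign_pos (sub_pos.mpr h)]
    norm_num
  · rw [if_neg (by simp [h]), if_neg (by simp [h]), h, sub_self, sign_zero]
    norm_num
  · rw [if_neg (not_lt.mpr h.le), if_pos h, sign_neg (sub_neg.mpr h)]
    norm_num

lemma density_measurable (i : ℕ) :
    Measurable (fun w : ℕ → ℝ =>
      ENNReal.ofReal (q ^ ((SignType.sign (w (i + 1) - w i)) : ℤ))) := by
  simp only [density_eq]
  exact Measurable.ite (measurableSet_lt (measurable_pi_apply i) (measurable_pi_apply (i+1)))
    measurable_const
    (Measurable.ite (measurableSet_lt (measurable_pi_apply (i+1)) (measurable_pi_apply i))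
      measurable_const measurable_const)

end key


lemma key_lintegral {q : ℝ} (hq : 0 < q) {f : ℝ → ℝ} (hf : ∀ a b : ℝ, a < b → f a ≤ f b)
    (hfm : Measurable f) (P : Measure (ℕ → ℝ)) (hP : IsQExchangeable q P) (i : ℕ)
    {T : Set (ℕ → ℝ)} (hT : MeasurableSet T)
    (hTswap : ∀ w, f (w i) = f (w (i + 1)) → (swapCoord i w ∈ T ↔ w ∈ T)) :
    ∫⁻ w in T, ENNReal.ofReal (q ^ ((SignType.sign (w (i + 1) - w i)) : ℤ)) ∂P =
    ∫⁻ w in T, ENNReal.ofReal (q ^ ((SignType.sign (f (w (i + 1)) - f (w i))) : ℤ)) ∂P := by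
  set g : (ℕ → ℝ) → ℝ≥0∞ :=
    fun w => ENNReal.ofReal (q ^ ((SignType.sign (w (i + 1) - w i)) : ℤ)) with hg
  set h : (ℕ → ℝ) → ℝ≥0∞ :=
    fun w => ENNReal.ofReal (q ^ ((SignType.sign (f (w (i + 1)) - f (w i))) : ℤ)) with hh
  set Dp : Set (ℕ → ℝ) := {w | f (w i) = f (w (i + 1)) ∧ w i < w (i + 1)} with hDpdef
  set Dm : Set (ℕ → ℝ) := {w | f (w i) = f (w (i + 1)) ∧ w (i + 1) < w i} with hDmdef
  have hDp : MeasurableSet Dp :=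
    (measurableSet_eq_fun (hfm.comp (measurable_pi_apply i))
      (hfm.comp (measurable_pi_apply (i + 1)))).inter
      (measurableSet_lt (measurable_pi_apply i) (measurable_pi_apply (i + 1)))
  have hDm : MeasurableSet Dm :=
    (measurableSet_eq_fun (hfm.comp (measurable_pi_apply i))
      (hfm.comp (measurable_pi_apply (i + 1)))).inter
      (measurableSet_lt (measurable_pi_apply (i + 1)) (measurable_pi_apply i))
  have hgh : ∀ w, w ∉ Dp ∪ Dm → g w = h w := by
    intro w hw
    rcases lt_trichotomy (w i) (w (i + 1)) with hlt | heq | hgt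
    · have hfne : f (w i) ≠ f (w (i + 1)) := fun hfe => hw (Or.inl ⟨hfe, hlt⟩)
      have hflt : f (w i) < f (w (i + 1)) := lt_of_le_of_ne (hf _ _ hlt) hfne
      simp only [hg, hh, sign_pos (sub_pos.mpr hlt), sign_pos (sub_pos.mpr hflt)]
    · simp [hg, hh, heq]
    · have hfne : f (w (i + 1)) ≠ f (w i) := fun hfe => hw (Or.inr ⟨hfe.symm, hgt⟩)
      have hflt : f (w (i + 1)) < f (w i) := lt_of_le_of_ne (hf _ _ hgt) hfne
      simp only [hg, hh, sign_neg (sub_neg.mpr hgt), sign_neg (sub_neg.mpr hflt)]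
  have hTeq : T = ((T ∩ Dp) ∪ (T ∩ Dm)) ∪ (T \ (Dp ∪ Dm)) := by
    rw [← Set.inter_union_distrib_left, Set.inter_union_diff]
  have hd1 : Disjoint ((T ∩ Dp) ∪ (T ∩ Dm)) (T \ (Dp ∪ Dm)) := by
    rw [Set.disjoint_left]
    rintro w hw hw2
    exact hw2.2 (hw.imp And.right And.right)
  have hd2 : Disjoint (T ∩ Dp) (T ∩ Dm) := by
    rw [Set.disjoint_left]
    rintro w ⟨_, _, h1⟩ ⟨_, _, h2⟩
    exact absurd h2 (lt_asymm h1)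
  have hsplit : ∀ φ : (ℕ → ℝ) → ℝ≥0∞, ∫⁻ w in T, φ w ∂P =
      (∫⁻ w in T ∩ Dp, φ w ∂P + ∫⁻ w in T ∩ Dm, φ w ∂P) + ∫⁻ w in T \ (Dp ∪ Dm), φ w ∂P := by
    intro φ
    conv_lhs => rw [hTeq]
    rw [lintegral_union (hT.diff (hDp.union hDm)) hd1, lintegral_union (hT.inter hDm) hd2]
  have hgp : ∫⁻ w in T ∩ Dp, g w ∂P = ENNReal.ofReal q * P (T ∩ Dp) := by
    have e : ∫⁻ w in T ∩ Dp, g w ∂P = ∫⁻ _ in T ∩ Dp, ENNReal.ofReal q ∂P :=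
      setLIntegral_congr_fun (hT.inter hDp)
        (fun w hw => by simp only [hg, density_eq, if_pos hw.2.2])
    rw [e, setLIntegral_const]
  have hgm : ∫⁻ w in T ∩ Dm, g w ∂P = ENNReal.ofReal q⁻¹ * P (T ∩ Dm) := by
    have e : ∫⁻ w in T ∩ Dm, g w ∂P = ∫⁻ _ in T ∩ Dm, ENNReal.ofReal q⁻¹ ∂P :=
      setLIntegral_congr_fun (hT.inter hDm)
        (fun w hw => by
          simp only [hg, density_eq, if_neg (not_lt.mpr hw.2.2.le), if_pos hw.2.2])
    rw [e, setLIntegral_const]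
  have hhp : ∫⁻ w in T ∩ Dp, h w ∂P = P (T ∩ Dp) := by
    have e : ∫⁻ w in T ∩ Dp, h w ∂P = ∫⁻ _ in T ∩ Dp, 1 ∂P :=
      setLIntegral_congr_fun (hT.inter hDp)
        (fun w hw => by simp [hh, hw.2.1.symm])
    rw [e, setLIntegral_one]
  have hhm : ∫⁻ w in T ∩ Dm, h w ∂P = P (T ∩ Dm) := by
    have e : ∫⁻ w in T ∩ Dm, h w ∂P = ∫⁻ _ in T ∩ Dm, 1 ∂P :=
      setLIntegral_congr_fun (hT.inter hDm)
        (fun w hw => by simp [hh, hw.2.1.symm])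
    rw [e, setLIntegral_one]
  have hpre : swapCoord i ⁻¹' (T ∩ Dp) = T ∩ Dm := by
    ext w
    simp only [Set.mem_preimage, Set.mem_inter_iff, hDpdef, hDmdef, Set.mem_setOf_eq,
      swapCoord_apply_self, swapCoord_apply_succ]
    constructor
    · rintro ⟨hwT, hfe, hlt⟩
      exact ⟨(hTswap w hfe.symm).mp hwT, hfe.symm, hlt⟩
    · rintro ⟨hwT, hfe, hlt⟩
      exact ⟨(hTswap w hfe).mpr hwT, hfe.symm, hlt⟩
  have hPm : P (T ∩ Dm) = ENNReal.ofReal q * P (T ∩ Dp) := by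
    rw [← hpre, ← Measure.map_apply (measurable_swapCoord i) (hT.inter hDp), hP i,
      withDensity_apply _ (hT.inter hDp), ← hg, hgp]
  have hrest : ∫⁻ w in T \ (Dp ∪ Dm), g w ∂P = ∫⁻ w in T \ (Dp ∪ Dm), h w ∂P :=
    setLIntegral_congr_fun (hT.diff (hDp.union hDm)) (fun w hw => hgh w hw.2)
  have hqq : ENNReal.ofReal q⁻¹ * ENNReal.ofReal q = 1 := by
    rw [← ENNReal.ofReal_mul (inv_pos.mpr hq).le, inv_mul_cancel₀ hq.ne', ENNReal.ofReal_one]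
  rw [hsplit g, hsplit h, hgp, hgm, hhp, hhm, hrest, hPm, ← mul_assoc, hqq, one_mul]
  ring

/-- the coordinatewise application of a weakly increasing `f : ℝ → ℝ` maps an
ergodic `q`-exchangeable measure to an ergodic `q`-exchangeable measure. -/
theorem stmt_4 (q : ℝ) (hq : 0 < q) (f : ℝ → ℝ) (hf : ∀ a b : ℝ, a < b → f a ≤ f b)
    (P : Measure (ℕ → ℝ)) [IsProbabilityMeasure P]
    (hP : IsQExchangeable q P) (hPerg : IsErgodicExchangeable P) :
    IsQExchangeable q (P.map (fun w => f ∘ w)) ∧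
      IsErgodicExchangeable (P.map (fun w => f ∘ w)) := by
  have hfm : Measurable f := by
    have : Monotone f := fun a b hab => by
      rcases hab.lt_or_eq with h | h
      · exact hf a b h
      · exact h ▸ le_refl _
    exact this.measurable
  have hF : Measurable (fun w : ℕ → ℝ => f ∘ w) :=
    measurable_pi_lambda _ fun j => hfm.comp (measurable_pi_apply j)
  constructor
  · intro i
    refine Measure.ext fun A hA => ?_
    have hswapA : MeasurableSet (swapCoord i ⁻¹' A) := measurable_swapCoord i hA
    have hFA : MeasurableSet ((fun w : ℕ → ℝ => f ∘ w) ⁻¹' A) := hF hA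
    rw [Measure.map_apply (measurable_swapCoord i) hA,
      Measure.map_apply hF hswapA,
      withDensity_apply _ hA,
      setLIntegral_map hA (density_measurable i) hF]
    have hcomm : (fun w : ℕ → ℝ => f ∘ w) ⁻¹' (swapCoord i ⁻¹' A)
        = swapCoord i ⁻¹' ((fun w : ℕ → ℝ => f ∘ w) ⁻¹' A) := by
      ext w
      simp only [Set.mem_preimage, swapCoord_comp]
    rw [hcomm, ← Measure.map_apply (measurable_swapCoord i) hFA, hP i,
      withDensity_apply _ hFA]
    have hTswap : ∀ w : ℕ → ℝ, f (w i) = f (w (i + 1)) →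
        (swapCoord i w ∈ (fun w : ℕ → ℝ => f ∘ w) ⁻¹' A ↔
          w ∈ (fun w : ℕ → ℝ => f ∘ w) ⁻¹' A) := by
      intro w hfw
      simp only [Set.mem_preimage, swapCoord_comp]
      rw [swapCoord_eq_self i (f ∘ w) hfw]
    have := key_lintegral hq hf hfm P hP i hFA hTswap
    rw [this]
    rfl
  · intro S hS hSinv
    have h1 : ∀ σ : Equiv.Perm ℕ, {j | σ j ≠ j}.Finite →
        (fun w : ℕ → ℝ => w ∘ σ) ⁻¹' ((fun w : ℕ → ℝ => f ∘ w) ⁻¹' S)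
          = (fun w : ℕ → ℝ => f ∘ w) ⁻¹' S := by
      intro σ hσ
      have : (fun w : ℕ → ℝ => w ∘ σ) ⁻¹' ((fun w : ℕ → ℝ => f ∘ w) ⁻¹' S)
          = (fun w : ℕ → ℝ => f ∘ w) ⁻¹' ((fun w : ℕ → ℝ => w ∘ σ) ⁻¹' S) := rfl
      rw [this, hSinv σ hσ]
    rw [Measure.map_apply hF hS]
    exact hPerg _ (hF hS) h1
end

section
/- Let v_1 ≤ v_2 ≤ ⋯ ≤ v_n be real numbers (an inversion-free word) and let (v_{τ(1)}, ..., v_{τ(n)}) be its q-shuffle. Then the law of the random word (v_{τ(1)}, ..., v_{τ(n)}) is a finitely q-exchangeable probability measure on ℝ^n: for every word u ∈ ℝ^n and every i ∈ {1, ..., n−1}, the probability of the word obtained from u by swapping the letters in positions i and i+1 equals q^{sgn(u_{i+1} − u_i)} times the probability of u. -/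
open MeasureTheory ProbabilityTheory

/-- The word remaining after `j` steps of the `q`-shuffle driven by the (0-indexed) choices
`x`: at each step the letter at position `x j` of the remaining word is removed. -/
def remWord {α : Type*} (v0 : List α) (x : ℕ → ℕ) : ℕ → List α
  | 0 => v0
  | j + 1 => (remWord v0 x j).eraseIdx (x j)

/-- The letter chosen at step `j` of the `q`-shuffle: the `x j`-th (0-indexed) letter of the
word remaining after `j` steps. -/
def qShuffleLetter {α : Type*} [Inhabited α] (v0 : List α) (x : ℕ → ℕ) (j : ℕ) : α :=
  (remWord v0 x j).getD (x j) default

/-- The `q`-integer `[m]_q = 1 + q + ⋯ + q^{m-1}`. -/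
def qInt (q : ℝ) (m : ℕ) : ℝ := ∑ i ∈ Finset.range m, q ^ i

namespace Stmt6

open MeasureTheory ProbabilityTheory
open scoped ENNReal

noncomputable def Dlist (v0 : List ℝ) (u : ℕ → ℝ) : ℕ → List ℝ
  | 0 => v0
  | j+1 => (Dlist v0 u j).erase (u j)

noncomputable def fsum (q : ℝ) (R : List ℝ) (c : ℝ) : ℝ :=
  ∑ p ∈ Finset.range R.length, if R[p]? = some c then q ^ p else 0

lemma fsum_nonneg {q : ℝ} (hq : 0 ≤ q) (R : List ℝ) (c : ℝ) : 0 ≤ fsum q R c := by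
  apply Finset.sum_nonneg
  intro p _
  split
  · positivity
  · exact le_refl 0

lemma fsum_cons (q a c : ℝ) (t : List ℝ) :
    fsum q (a :: t) c = (if a = c then 1 else 0) + q * fsum q t c := by
  unfold fsum
  rw [List.length_cons, Finset.sum_range_succ', Finset.mul_sum]
  simp only [List.getElem?_cons_succ, List.getElem?_cons_zero, pow_zero]
  rw [add_comm]
  congr 1
  · simp [Option.some_inj]
  · apply Finset.sum_congr rfl
    intro p _
    split <;> ring

lemma fsum_of_not_mem {q c : ℝ} {R : List ℝ} (h : c ∉ R) : fsum q R c = 0 := by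
  apply Finset.sum_eq_zero
  intro p _
  rw [if_neg]
  intro hc
  rw [List.getElem?_eq_some_iff] at hc
  obtain ⟨hlt, he⟩ := hc
  exact h (he ▸ List.getElem_mem hlt)

lemma fsum_erase_lt {q c d : ℝ} {R : List ℝ} (hs : R.Pairwise (· ≤ ·)) (hcd : c < d) :
    fsum q (R.erase d) c = fsum q R c := by
  induction R with
  | nil => simp
  | cons a t ih =>
    by_cases had : a = d
    · subst had
      rw [List.erase_cons_head, fsum_cons, if_neg (ne_of_gt hcd),
        fsum_of_not_mem (fun hc => absurd (List.rel_of_pairwise_cons hs hc) (not_le.2 hcd))]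
      ring
    · rw [List.erase_cons_tail (by simpa using had), fsum_cons, fsum_cons, ih hs.tail]

lemma fsum_erase_mem {q c d : ℝ} {R : List ℝ} (hs : R.Pairwise (· ≤ ·)) (hcd : c < d)
    (hc : c ∈ R) : q * fsum q (R.erase c) d = fsum q R d := by
  induction R with
  | nil => simp at hc
  | cons a t ih =>
    by_cases hac : a = c
    · subst hac
      rw [List.erase_cons_head, fsum_cons, if_neg (ne_of_lt hcd)]
      ring
    · have hct : c ∈ t := by
        rcases List.mem_cons.1 hc with h | h
        · exact absurd h.symm hac
        · exact h
      have had : a ≠ d := ne_of_lt (lt_of_le_of_lt (List.rel_of_pairwise_cons hs hct) hcd)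
      rw [List.erase_cons_tail (by simpa using hac), fsum_cons, fsum_cons,
        if_neg had, ← ih hs.tail hct]
      ring

lemma fsum_main {q c d : ℝ} {R : List ℝ} (hs : R.Pairwise (· ≤ ·)) (hcd : c < d) :
    fsum q R d * fsum q (R.erase d) c = q * (fsum q R c * fsum q (R.erase c) d) := by
  by_cases hc : c ∈ R
  · rw [fsum_erase_lt hs hcd, ← fsum_erase_mem hs hcd hc]
    ring
  · rw [fsum_of_not_mem hc,
      fsum_of_not_mem (fun h => hc ((List.erase_sublist (a := d) (l := R)).mem h))]
    ring

lemma eraseIdx_eq_erase {c : ℝ} : ∀ (R : List ℝ) (p : ℕ), R.Pairwise (· ≤ ·) →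
    R[p]? = some c → R.eraseIdx p = R.erase c := by
  intro R
  induction R with
  | nil => intro p _ h; simp at h
  | cons a t ih =>
    intro p hs h
    match p with
    | 0 =>
      simp only [List.getElem?_cons_zero, Option.some_inj] at h
      subst h
      rw [List.eraseIdx_cons_zero, List.erase_cons_head]
    | Nat.succ k =>
      simp only [List.getElem?_cons_succ] at h
      by_cases hac : a = c
      · subst hac
        have hct : a ∈ t := by
          rw [List.getElem?_eq_some_iff] at h
          exact h.2 ▸ List.getElem_mem h.1
        rw [List.eraseIdx_cons_succ, ih k hs.tail h, List.erase_cons_head]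
        -- goal : a :: t.erase a = t
        match t, hct with
        | b :: t', hct =>
          have hab : a ≤ b := List.rel_of_pairwise_cons hs (List.mem_cons_self (a := b) (l := t'))
          have hba : b = a := by
            rcases List.mem_cons.1 hct with h' | h'
            · exact h'.symm
            · exact le_antisymm (List.rel_of_pairwise_cons hs.tail h') hab
          subst hba
          rw [List.erase_cons_head]
      · rw [List.eraseIdx_cons_succ, ih k hs.tail h,
          List.erase_cons_tail (by simpa using hac)]




variable {v0 : List ℝ} {u u' : ℕ → ℝ} {x y : ℕ → ℕ}

lemma Dlist_sorted (hs : v0.Pairwise (· ≤ ·)) : ∀ j, (Dlist v0 u j).Pairwise (· ≤ ·)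
  | 0 => hs
  | j+1 => List.Pairwise.sublist (List.erase_sublist) (Dlist_sorted hs j)

lemma Dlist_length_le : ∀ j, (Dlist v0 u j).length ≤ v0.length
  | 0 => le_refl _
  | j+1 => le_trans ((List.erase_sublist).length_le) (Dlist_length_le j)

lemma Dlist_congr (j : ℕ) (h : ∀ t < j, u t = u' t) : Dlist v0 u j = Dlist v0 u' j := by
  induction j with
  | zero => rfl
  | succ j ih =>
    show (Dlist v0 u j).erase (u j) = (Dlist v0 u' j).erase (u' j)
    rw [ih (fun t ht => h t (Nat.lt_succ_of_lt ht)), h j (Nat.lt_succ_self j)]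

lemma Dlist_length (j : ℕ) (h : ∀ k < j, u k ∈ Dlist v0 u k) :
    j ≤ v0.length ∧ (Dlist v0 u j).length = v0.length - j := by
  induction j with
  | zero => exact ⟨Nat.zero_le _, rfl⟩
  | succ j ih =>
    obtain ⟨h1, h2⟩ := ih (fun k hk => h k (Nat.lt_succ_of_lt hk))
    have hmem : u j ∈ Dlist v0 u j := h j (Nat.lt_succ_self j)
    have hpos : 0 < (Dlist v0 u j).length := List.length_pos_of_mem hmem
    have hjlt : j < v0.length := by omega
    constructor
    · omega
    · show ((Dlist v0 u j).erase (u j)).length = v0.length - (j+1)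
      rw [List.length_erase_of_mem hmem, h2]
      omega

lemma remWord_congr (j : ℕ) (h : ∀ t < j, x t = y t) : remWord v0 x j = remWord v0 y j := by
  induction j with
  | zero => rfl
  | succ j ih =>
    show (remWord v0 x j).eraseIdx (x j) = (remWord v0 y j).eraseIdx (y j)
    rw [ih (fun t ht => h t (Nat.lt_succ_of_lt ht)), h j (Nat.lt_succ_self j)]

lemma remWord_eq_Dlist (hs : v0.Pairwise (· ≤ ·)) (j : ℕ)
    (h : ∀ k < j, (remWord v0 x k)[x k]? = some (u k)) :
    remWord v0 x j = Dlist v0 u j := by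
  induction j with
  | zero => rfl
  | succ j ih =>
    have hj := ih (fun k hk => h k (Nat.lt_succ_of_lt hk))
    show (remWord v0 x j).eraseIdx (x j) = (Dlist v0 u j).erase (u j)
    rw [hj]
    exact eraseIdx_eq_erase _ _ (Dlist_sorted hs j) (hj ▸ h j (Nat.lt_succ_self j))

lemma char_iff (hs : v0.Pairwise (· ≤ ·)) : ∀ j,
    ((∀ k < j, (Dlist v0 u k)[x k]? = some (u k)) ↔
      (∀ k < j, (remWord v0 x k)[x k]? = some (u k))) := by
  intro j
  induction j with
  | zero => simp
  | succ j ih =>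
    constructor
    · intro h
      have hprev : ∀ k < j, (remWord v0 x k)[x k]? = some (u k) :=
        ih.1 (fun k hk => h k (Nat.lt_succ_of_lt hk))
      have hrem : remWord v0 x j = Dlist v0 u j := remWord_eq_Dlist hs j hprev
      intro k hk
      rcases Nat.lt_succ_iff_lt_or_eq.1 hk with hk' | hk'
      · exact hprev k hk'
      · subst hk'; rw [hrem]; exact h k (Nat.lt_succ_self k)
    · intro h
      have hprev : ∀ k < j, (Dlist v0 u k)[x k]? = some (u k) :=
        ih.2 (fun k hk => h k (Nat.lt_succ_of_lt hk))
      have hrem : remWord v0 x j = Dlist v0 u j :=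
        remWord_eq_Dlist hs j (fun k hk => h k (Nat.lt_succ_of_lt hk))
      intro k hk
      rcases Nat.lt_succ_iff_lt_or_eq.1 hk with hk' | hk'
      · exact hprev k hk'
      · subst hk'; rw [← hrem]; exact h k (Nat.lt_succ_self k)

/-- Main characterization: D-form at all k < j iff validity + letters match. -/
lemma char_full (hs : v0.Pairwise (· ≤ ·)) (j : ℕ) :
    (∀ k < j, (Dlist v0 u k)[x k]? = some (u k)) ↔
      (∀ k < j, x k < v0.length - k ∧ (remWord v0 x k).getD (x k) default = u k) := by
  induction j with
  | zero => simp
  | succ j ih =>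
    constructor
    · intro h
      have hprevD : ∀ k < j, (Dlist v0 u k)[x k]? = some (u k) :=
        fun k hk => h k (Nat.lt_succ_of_lt hk)
      have hprev := ih.1 hprevD
      intro k hk
      rcases Nat.lt_succ_iff_lt_or_eq.1 hk with hk' | hk'
      · exact hprev k hk'
      · subst hk'
        have hrem : remWord v0 x k = Dlist v0 u k :=
          remWord_eq_Dlist hs k ((char_iff hs k).1 hprevD)
        have hmem : ∀ k' < k, u k' ∈ Dlist v0 u k' := by
          intro k' hk'
          have := hprevD k' hk'
          rw [List.getElem?_eq_some_iff] at this
          exact this.2 ▸ List.getElem_mem this.1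
        have hlen : (Dlist v0 u k).length = v0.length - k := (Dlist_length k hmem).2
        have hk2 := h k (Nat.lt_succ_self k)
        rw [List.getElem?_eq_some_iff] at hk2
        obtain ⟨hlt, he⟩ := hk2
        refine ⟨by omega, ?_⟩
        rw [hrem, List.getD_eq_getElem _ _ (by omega : x k < (Dlist v0 u k).length), he]
    · intro h
      have hprev : ∀ k < j, (Dlist v0 u k)[x k]? = some (u k) :=
        ih.2 (fun k hk => h k (Nat.lt_succ_of_lt hk))
      intro k hk
      rcases Nat.lt_succ_iff_lt_or_eq.1 hk with hk' | hk'
      · exact hprev k hk'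
      · subst hk'
        have hrem : remWord v0 x k = Dlist v0 u k :=
          remWord_eq_Dlist hs k ((char_iff hs k).1 hprev)
        have hmem : ∀ k' < k, u k' ∈ Dlist v0 u k' := by
          intro k' hk'
          have := hprev k' hk'
          rw [List.getElem?_eq_some_iff] at this
          exact this.2 ▸ List.getElem_mem this.1
        have hlen : (Dlist v0 u k).length = v0.length - k := (Dlist_length k hmem).2
        obtain ⟨hb, he⟩ := h k (Nat.lt_succ_self k)
        have hlt : x k < (Dlist v0 u k).length := by omega
        rw [← hrem] at hlt
        rw [List.getD_eq_getElem _ _ hlt] at he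
        rw [← hrem, List.getElem?_eq_some_iff]
        exact ⟨hlt, he⟩


noncomputable def wFn (q : ℝ) (n j p : ℕ) : ℝ≥0∞ :=
  ENNReal.ofReal (if p < n - j then q ^ p / qInt q (n - j) else 0)

def padN {n : ℕ} (x : Fin n → ℕ) : ℕ → ℕ := fun t => if h : t < n then x ⟨t, h⟩ else 0
def padR {n : ℕ} (u : Fin n → ℝ) : ℕ → ℝ := fun t => if h : t < n then u ⟨t, h⟩ else 0



lemma qShuffleLetter_congr {v0 : List ℝ} {x y : ℕ → ℕ} (m : ℕ) (h : ∀ t ≤ m, x t = y t) :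
    qShuffleLetter v0 x m = qShuffleLetter v0 y m := by
  unfold qShuffleLetter
  rw [remWord_congr m (fun t ht => h t (le_of_lt ht)), h m (le_refl m)]

theorem law_eq (q : ℝ) (n : ℕ)
    (v : Fin n → ℝ) (hv : Monotone v)
    (Ω : Type*) [MeasurableSpace Ω] (P : Measure Ω) [IsProbabilityMeasure P]
    (ξ : ℕ → Ω → ℕ) (hmeas : ∀ j, Measurable (ξ j))
    (hindep : iIndepFun ξ P)
    (hgeom : ∀ j < n, ∀ i : ℕ, P {ω | ξ j ω = i} =
      ENNReal.ofReal (if i < n - j then q ^ i / qInt q (n - j) else 0))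
    (u : Fin n → ℝ) :
    (P.map (fun ω (m : Fin n) => qShuffleLetter (List.ofFn v) (fun t => ξ t ω) (m : ℕ))) {u} =
      ∏ j : Fin n, ∑ p ∈ Finset.range n,
        (if (Dlist (List.ofFn v) (padR u) (j : ℕ))[p]? = some (u j) then wFn q n j p else 0) := by
  set v0 : List ℝ := List.ofFn v with hv0
  have hlen : v0.length = n := List.length_ofFn
  have hsort : v0.Pairwise (· ≤ ·) := hv.sortedLE_ofFn.pairwise
  set Φ : Ω → (Fin n → ℝ) :=
    fun ω (m : Fin n) => qShuffleLetter v0 (fun t => ξ t ω) (m : ℕ) with hΦdef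
  -- measurability of Φ
  have hΦ : Measurable Φ := by
    apply measurable_pi_lambda
    intro m
    have hrw : (fun ω => qShuffleLetter v0 (fun t => ξ t ω) (m : ℕ)) =
        (fun y : Fin ((m : ℕ) + 1) → ℕ => qShuffleLetter v0 (padN y) (m : ℕ)) ∘
          (fun ω (t : Fin ((m : ℕ) + 1)) => ξ t ω) := by
      funext ω
      exact qShuffleLetter_congr _ (fun t ht => by
        simp only [padN, Function.comp]
        rw [dif_pos (Nat.lt_succ_of_le ht)])
    rw [hrw]
    exact (measurable_of_countable _).comp (measurable_pi_lambda _ fun t => hmeas t)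
  rw [Measure.map_apply hΦ (measurableSet_singleton u)]
  -- partition of Ω
  set A : (Fin n → ℕ) → Set Ω := fun x => ⋂ j : Fin n, (ξ (j : ℕ)) ⁻¹' {x j} with hA
  have hAmeas : ∀ x, MeasurableSet (A x) :=
    fun x => MeasurableSet.iInter fun j => hmeas j (measurableSet_singleton (x j))
  have hEmeas : MeasurableSet (Φ ⁻¹' {u}) := hΦ (measurableSet_singleton u)
  have hEdecomp : Φ ⁻¹' {u} = ⋃ x : Fin n → ℕ, (Φ ⁻¹' {u} ∩ A x) := by
    ext ω
    simp only [Set.mem_iUnion, Set.mem_inter_iff]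
    constructor
    · intro hω
      exact ⟨fun j => ξ (j : ℕ) ω, hω, by simp [hA]⟩
    · rintro ⟨x, hω, -⟩; exact hω
  have hdisj : Pairwise (Function.onFun Disjoint fun x => Φ ⁻¹' {u} ∩ A x) := by
    intro x y hxy
    refine Set.disjoint_left.2 fun ω hωx hωy => hxy (funext fun j => ?_)
    have h1 : ξ (j : ℕ) ω = x j := by
      have := hωx.2; simp only [hA, Set.mem_iInter, Set.mem_preimage, Set.mem_singleton_iff] at this
      exact this j
    have h2 : ξ (j : ℕ) ω = y j := by
      have := hωy.2; simp only [hA, Set.mem_iInter, Set.mem_preimage, Set.mem_singleton_iff] at this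
      exact this j
    rw [← h1, h2]
  rw [hEdecomp, measure_iUnion hdisj (fun x => hEmeas.inter (hAmeas x))]
  -- identify each piece
  have hpiece : ∀ x : Fin n → ℕ, Φ ⁻¹' {u} ∩ A x =
      if (fun m : Fin n => qShuffleLetter v0 (padN x) (m : ℕ)) = u then A x else ∅ := by
    intro x
    have hkey : ∀ ω ∈ A x, Φ ω = fun m : Fin n => qShuffleLetter v0 (padN x) (m : ℕ) := by
      intro ω hω
      simp only [hA, Set.mem_iInter, Set.mem_preimage, Set.mem_singleton_iff] at hω
      funext m
      exact qShuffleLetter_congr _ (fun t ht => by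
        have htn : t < n := lt_of_le_of_lt ht m.isLt
        simp only [padN]
        rw [dif_pos htn]
        exact hω ⟨t, htn⟩)
    split
    · rename_i hcond
      ext ω
      simp only [Set.mem_inter_iff, Set.mem_preimage, Set.mem_singleton_iff]
      constructor
      · rintro ⟨-, h2⟩; exact h2
      · intro hω; exact ⟨by rw [hkey ω hω, hcond], hω⟩
    · rename_i hcond
      ext ω
      simp only [Set.mem_inter_iff, Set.mem_preimage, Set.mem_singleton_iff, Set.mem_empty_iff_false,
        iff_false]
      rintro ⟨h1, h2⟩
      exact hcond (by rw [← hkey ω h2, h1])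
  -- probability of A x via independence
  have hPA : ∀ x : Fin n → ℕ, P (A x) = ∏ j : Fin n, wFn q n j (x j) := by
    intro x
    have hinter : A x = ⋂ j ∈ Finset.range n, (ξ j) ⁻¹' {padN x j} := by
      ext ω
      simp only [hA, Set.mem_iInter, Set.mem_preimage, Set.mem_singleton_iff, Finset.mem_range]
      constructor
      · intro h j hj
        simp only [padN]; rw [dif_pos hj]; exact h ⟨j, hj⟩
      · intro h j
        have := h (j : ℕ) j.isLt
        simpa only [padN, dif_pos j.isLt] using this
    rw [hinter, hindep.meas_biInter (fun j _ => ⟨{padN x j}, measurableSet_singleton _, rfl⟩)]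
    have : ∀ j ∈ Finset.range n, P ((ξ j) ⁻¹' {padN x j}) = wFn q n j (padN x j) := by
      intro j hj
      rw [Finset.mem_range] at hj
      have := hgeom j hj (padN x j)
      simp only [wFn]
      rw [← this]
      rfl
    rw [Finset.prod_congr rfl this, ← Fin.prod_univ_eq_prod_range (fun j => wFn q n j (padN x j)) n]
    apply Finset.prod_congr rfl
    intro j _
    simp only [padN, dif_pos j.isLt]
  calc ∑' x : Fin n → ℕ, P (Φ ⁻¹' {u} ∩ A x)
      = ∑' x : Fin n → ℕ, ∏ j : Fin n,
          (if (Dlist v0 (padR u) (j : ℕ))[x j]? = some (u j) then wFn q n j (x j) else 0) := by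
        congr 1
        funext x
        rw [hpiece x, apply_ite P, measure_empty, hPA x]
        by_cases hval : ∀ j : Fin n, (x j) < n - (j : ℕ)
        · have hiff : ((fun m : Fin n => qShuffleLetter v0 (padN x) (m : ℕ)) = u) ↔
              (∀ k < n, (Dlist v0 (padR u) k)[padN x k]? = some (padR u k)) := by
            rw [char_full hsort n, funext_iff]
            constructor
            · intro h k hk
              refine ⟨by rw [hlen]; simp only [padN, dif_pos hk]; exact hval ⟨k, hk⟩, ?_⟩
              have := h ⟨k, hk⟩
              simpa only [qShuffleLetter, padN, padR, dif_pos hk] using this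
            · intro h m
              have := (h (m : ℕ) m.isLt).2
              simpa only [qShuffleLetter, padN, padR, dif_pos m.isLt] using this
          by_cases hcond : (fun m : Fin n => qShuffleLetter v0 (padN x) (m : ℕ)) = u
          · rw [if_pos hcond]
            have hD := hiff.1 hcond
            apply Finset.prod_congr rfl
            intro j _
            rw [if_pos]
            have := hD (j : ℕ) j.isLt
            simpa only [padN, padR, dif_pos j.isLt] using this
          · rw [if_neg hcond]
            have : ¬ ∀ j : Fin n, (Dlist v0 (padR u) (j : ℕ))[x j]? = some (u j) := by
              intro hall
              apply hcond
              apply hiff.2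
              intro k hk
              have := hall ⟨k, hk⟩
              simpa only [padN, padR, dif_pos hk] using this
            push_neg at this
            obtain ⟨j₀, hj₀⟩ := this
            refine (Finset.prod_eq_zero (Finset.mem_univ j₀) ?_).symm
            rw [if_neg hj₀]
        · push_neg at hval
          obtain ⟨j₀, hj₀⟩ := hval
          have hw0 : wFn q n (j₀ : ℕ) (x j₀) = 0 := by
            simp only [wFn]
            rw [if_neg (not_lt.2 hj₀), ENNReal.ofReal_zero]
          have hL : (∏ j : Fin n, wFn q n (j : ℕ) (x j)) = 0 :=
            Finset.prod_eq_zero (Finset.mem_univ j₀) hw0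
          have hR : (∏ j : Fin n,
              (if (Dlist v0 (padR u) (j : ℕ))[x j]? = some (u j) then wFn q n j (x j) else 0)) = 0 := by
            apply Finset.prod_eq_zero (Finset.mem_univ j₀)
            rw [hw0]; split <;> rfl
          rw [hR]
          split <;> [exact hL; rfl]
    _ = ∑ x ∈ Fintype.piFinset (fun _ : Fin n => Finset.range n), ∏ j : Fin n,
          (if (Dlist v0 (padR u) (j : ℕ))[x j]? = some (u j) then wFn q n j (x j) else 0) := by
        apply tsum_eq_sum
        intro x hx
        rw [Fintype.mem_piFinset] at hx
        push_neg at hx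
        obtain ⟨j₀, hj₀⟩ := hx
        rw [Finset.mem_range, not_lt] at hj₀
        apply Finset.prod_eq_zero (Finset.mem_univ j₀)
        rw [if_neg]
        intro hc
        rw [List.getElem?_eq_some_iff] at hc
        have := lt_of_lt_of_le hc.1 (le_trans (Dlist_length_le _) hlen.le)
        omega
    _ = ∏ j : Fin n, ∑ p ∈ Finset.range n,
          (if (Dlist v0 (padR u) (j : ℕ))[p]? = some (u j) then wFn q n j p else 0) := by
        rw [Finset.prod_univ_sum]


noncomputable def Wt (q : ℝ) (n : ℕ) (v0 : List ℝ) (w : Fin n → ℝ) (j : Fin n) : ℝ≥0∞ :=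
  ∑ p ∈ Finset.range n,
    if (Dlist v0 (padR w) (j : ℕ))[p]? = some (w j) then wFn q n (j : ℕ) p else 0



lemma qInt_nonneg {q : ℝ} (hq : 0 ≤ q) (m : ℕ) : 0 ≤ qInt q m :=
  Finset.sum_nonneg fun i _ => pow_nonneg hq i

lemma Wt_zero {q : ℝ} {n : ℕ} {v0 : List ℝ} {w : Fin n → ℝ} {j : Fin n}
    (h : w j ∉ Dlist v0 (padR w) (j : ℕ)) : Wt q n v0 w j = 0 := by
  apply Finset.sum_eq_zero
  intro p _
  rw [if_neg]
  intro hc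
  rw [List.getElem?_eq_some_iff] at hc
  exact h (hc.2 ▸ List.getElem_mem hc.1)

lemma sum_ite_wFn {q : ℝ} (hq : 0 ≤ q) {n j : ℕ} {R : List ℝ} {c : ℝ}
    (h1 : R.length ≤ n - j) (h2 : R.length ≤ n) :
    (∑ p ∈ Finset.range n, if R[p]? = some c then wFn q n j p else 0)
      = ENNReal.ofReal (fsum q R c / qInt q (n - j)) := by
  have hterm : ∀ p ∈ Finset.range n,
      (if R[p]? = some c then wFn q n j p else 0)
        = ENNReal.ofReal (if R[p]? = some c then q ^ p / qInt q (n - j) else 0) := by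
    intro p _
    by_cases hc : R[p]? = some c
    · have hp : p < R.length := (List.getElem?_eq_some_iff.1 hc).1
      rw [if_pos hc, if_pos hc]
      simp only [wFn]
      rw [if_pos (by omega)]
    · rw [if_neg hc, if_neg hc, ENNReal.ofReal_zero]
  rw [Finset.sum_congr rfl hterm, ← ENNReal.ofReal_sum_of_nonneg]
  · congr 1
    rw [← Finset.sum_subset (Finset.range_subset_range.2 h2)]
    · rw [fsum, Finset.sum_div]
      apply Finset.sum_congr rfl
      intro p _
      split
      · rfl
      · rw [zero_div]
    · intro p _ hp
      rw [Finset.mem_range, not_lt] at hp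
      rw [if_neg]
      intro hc
      have := (List.getElem?_eq_some_iff.1 hc).1
      omega
  · intro p _
    split
    · exact div_nonneg (pow_nonneg hq p) (qInt_nonneg hq _)
    · exact le_refl 0

lemma finSwap_eq_self {α : Type*} {n : ℕ} {a b : Fin n} {u : Fin n → α} (h : u a = u b) :
    finSwap a b u = u := by
  funext j
  simp only [finSwap]
  split_ifs with h1 h2
  · rw [h1, h]
  · rw [h2, h]
  · rfl

lemma finSwap_invol {α : Type*} {n : ℕ} (a b : Fin n) (u : Fin n → α) :
    finSwap a b (finSwap a b u) = u := by
  funext j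
  by_cases h1 : j = a <;> by_cases h2 : j = b <;>
    simp only [finSwap, h1, h2, if_pos, if_neg, if_true] <;> simp_all [finSwap]

/-- Core comparison: ascent case. -/
lemma prod_swap_lt (q : ℝ) (hq0 : 0 < q) (n : ℕ) (v0 : List ℝ)
    (hsort : v0.Pairwise (· ≤ ·)) (hlen : v0.length = n)
    (u : Fin n → ℝ) (i : ℕ) (h : i + 1 < n)
    (hlt : u ⟨i, Nat.lt_of_succ_lt h⟩ < u ⟨i + 1, h⟩) :
    ∏ j : Fin n, Wt q n v0 (finSwap ⟨i, Nat.lt_of_succ_lt h⟩ ⟨i + 1, h⟩ u) j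
      = ENNReal.ofReal q * ∏ j : Fin n, Wt q n v0 u j := by
  set a : Fin n := ⟨i, Nat.lt_of_succ_lt h⟩ with ha
  set b : Fin n := ⟨i + 1, h⟩ with hb
  have hab : a ≠ b := by simp [ha, hb, Fin.ext_iff]
  set u' : Fin n → ℝ := finSwap a b u with hu'
  set c : ℝ := u a with hc
  set d : ℝ := u b with hd
  have hu'a : u' a = d := by simp [hu', finSwap, hd]
  have hu'b : u' b = c := by simp [hu', finSwap, hab.symm, hc]
  have hu'j : ∀ j : Fin n, j ≠ a → j ≠ b → u' j = u j := by
    intro j hja hjb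
    simp [hu', finSwap, hja, hjb]
  have hpad : ∀ t : ℕ, t ≠ i → t ≠ i + 1 → padR u' t = padR u t := by
    intro t ht1 ht2
    simp only [padR]
    split
    · rename_i htn
      exact hu'j ⟨t, htn⟩ (by simp [ha, Fin.ext_iff, ht1]) (by simp [hb, Fin.ext_iff, ht2])
    · rfl
  have hpadi : padR u' i = d := by simp only [padR, dif_pos (Nat.lt_of_succ_lt h)]; exact hu'a
  have hpadi1 : padR u' (i + 1) = c := by simp only [padR, dif_pos h]; exact hu'b
  have hpadiu : padR u i = c := by simp only [padR, dif_pos (Nat.lt_of_succ_lt h)]; rfl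
  have hpadi1u : padR u (i + 1) = d := by simp only [padR, dif_pos h]; rfl
  have hDpre : ∀ j ≤ i, Dlist v0 (padR u') j = Dlist v0 (padR u) j := by
    intro j hj
    exact Dlist_congr j (fun t ht => hpad t (by omega) (by omega))
  set R : List ℝ := Dlist v0 (padR u) i with hR
  have hRu' : Dlist v0 (padR u') i = R := hDpre i le_rfl
  have hsR : R.Pairwise (· ≤ ·) := Dlist_sorted hsort i
  have hD1u : Dlist v0 (padR u) (i + 1) = R.erase c := by
    show (Dlist v0 (padR u) i).erase (padR u i) = R.erase c
    rw [hpadiu]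
  have hD1u' : Dlist v0 (padR u') (i + 1) = R.erase d := by
    show (Dlist v0 (padR u') i).erase (padR u' i) = R.erase d
    rw [hpadi, hRu']
  have hDpost : ∀ j : ℕ, i + 2 ≤ j → Dlist v0 (padR u') j = Dlist v0 (padR u) j := by
    intro j hj
    induction j, hj using Nat.le_induction with
    | base =>
      show (Dlist v0 (padR u') (i+1)).erase (padR u' (i+1))
        = (Dlist v0 (padR u) (i+1)).erase (padR u (i+1))
      rw [hD1u', hD1u, hpadi1, hpadi1u, List.erase_comm]
    | succ j hj ih =>
      show (Dlist v0 (padR u') j).erase (padR u' j) = (Dlist v0 (padR u) j).erase (padR u j)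
      rw [ih, hpad j (by omega) (by omega)]
  -- split products
  have hbmem : b ∈ Finset.univ.erase a := Finset.mem_erase.2 ⟨hab.symm, Finset.mem_univ b⟩
  have hsplit : ∀ w : Fin n → ℝ, (∏ j : Fin n, Wt q n v0 w j)
      = Wt q n v0 w a * (Wt q n v0 w b * ∏ j ∈ (Finset.univ.erase a).erase b, Wt q n v0 w j) := by
    intro w
    rw [← Finset.mul_prod_erase Finset.univ _ (Finset.mem_univ a),
      ← Finset.mul_prod_erase (Finset.univ.erase a) _ hbmem]
  rw [hsplit u', hsplit u]
  have hrest : ∀ j ∈ (Finset.univ.erase a).erase b, Wt q n v0 u' j = Wt q n v0 u j := by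
    intro j hj
    rw [Finset.mem_erase] at hj
    obtain ⟨hjb, hj'⟩ := hj
    rw [Finset.mem_erase] at hj'
    obtain ⟨hja, -⟩ := hj'
    have hji : (j : ℕ) ≠ i := fun hh => hja (by simp [ha, Fin.ext_iff, hh])
    have hji1 : (j : ℕ) ≠ i + 1 := fun hh => hjb (by simp [hb, Fin.ext_iff, hh])
    have hDj : Dlist v0 (padR u') (j : ℕ) = Dlist v0 (padR u) (j : ℕ) := by
      rcases lt_or_ge (j : ℕ) (i + 2) with hcase | hcase
      · exact hDpre _ (by omega)
      · exact hDpost _ hcase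
    have huj : u' j = u j := hu'j j hja hjb
    simp only [Wt, hDj, huj]
  rw [Finset.prod_congr rfl hrest]
  -- now the two special factors
  by_cases hok : ∀ k < i, padR u k ∈ Dlist v0 (padR u) k
  · have hlenR : R.length = n - i := by
      have := (Dlist_length i hok).2
      rw [hlen] at this
      exact this
    have haval : (a : ℕ) = i := rfl
    have hbval : (b : ℕ) = i + 1 := rfl
    by_cases hcR : c ∈ R
    · by_cases hdR : d ∈ R
      · -- main case
        have hWua : Wt q n v0 u a = ENNReal.ofReal (fsum q R c / qInt q (n - i)) := by
          simp only [Wt]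
          rw [← hR, ← hc]
          exact sum_ite_wFn hq0.le (by omega) (by omega)
        have hWub : Wt q n v0 u b
            = ENNReal.ofReal (fsum q (R.erase c) d / qInt q (n - (i + 1))) := by
          simp only [Wt]
          rw [hD1u, ← hd]
          have hle : (R.erase c).length = n - i - 1 := by
            rw [List.length_erase_of_mem hcR, hlenR]
          exact sum_ite_wFn hq0.le (by omega) (by omega)
        have hWu'a : Wt q n v0 u' a = ENNReal.ofReal (fsum q R d / qInt q (n - i)) := by
          simp only [Wt]
          rw [hRu', hu'a]
          exact sum_ite_wFn hq0.le (by omega) (by omega)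
        have hWu'b : Wt q n v0 u' b
            = ENNReal.ofReal (fsum q (R.erase d) c / qInt q (n - (i + 1))) := by
          simp only [Wt]
          rw [hD1u', hu'b]
          have hle : (R.erase d).length = n - i - 1 := by
            rw [List.length_erase_of_mem hdR, hlenR]
          exact sum_ite_wFn hq0.le (by omega) (by omega)
        rw [hWua, hWub, hWu'a, hWu'b]
        have hreal : (fsum q R d / qInt q (n - i)) * (fsum q (R.erase d) c / qInt q (n - (i + 1)))
            = q * ((fsum q R c / qInt q (n - i)) * (fsum q (R.erase c) d / qInt q (n - (i + 1)))) := by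
          rw [div_mul_div_comm, div_mul_div_comm, ← mul_div_assoc, fsum_main hsR hlt]
        have hnn1 : (0:ℝ) ≤ fsum q R d / qInt q (n - i) :=
          div_nonneg (fsum_nonneg hq0.le _ _) (qInt_nonneg hq0.le _)
        have hnn2 : (0:ℝ) ≤ fsum q R c / qInt q (n - i) :=
          div_nonneg (fsum_nonneg hq0.le _ _) (qInt_nonneg hq0.le _)
        rw [← mul_assoc, ← mul_assoc, ← mul_assoc]
        congr 1
        rw [← ENNReal.ofReal_mul hnn1, ← ENNReal.ofReal_mul hq0.le,
          ← ENNReal.ofReal_mul (mul_nonneg hq0.le hnn2), hreal]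
        congr 1
        ring
      · -- d ∉ R
        have h1 : Wt q n v0 u' a = 0 := by
          apply Wt_zero
          rw [hRu', hu'a]
          exact hdR
        have h2 : Wt q n v0 u b = 0 := by
          apply Wt_zero
          show u b ∉ Dlist v0 (padR u) (i + 1)
          rw [hD1u]
          intro hmem
          exact hdR ((List.erase_sublist (a := c) (l := R)).mem hmem)
        rw [h1, h2]
        ring
    · -- c ∉ R
      have h1 : Wt q n v0 u a = 0 := by
        apply Wt_zero
        show u a ∉ Dlist v0 (padR u) i
        rw [← hR]
        exact hcR
      have h2 : Wt q n v0 u' b = 0 := by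
        apply Wt_zero
        show u' b ∉ Dlist v0 (padR u') (i + 1)
        rw [hD1u', hu'b]
        intro hmem
        exact hcR ((List.erase_sublist (a := d) (l := R)).mem hmem)
      rw [h1, h2]
      ring
  · -- some earlier failure
    push_neg at hok
    obtain ⟨k, hk, hkmem⟩ := hok
    have hkn : k < n := by omega
    set k' : Fin n := ⟨k, hkn⟩ with hk'
    have hk'a : k' ≠ a := by simp [hk', ha, Fin.ext_iff]; omega
    have hk'b : k' ≠ b := by simp [hk', hb, Fin.ext_iff]; omega
    have hk'mem : k' ∈ (Finset.univ.erase a).erase b :=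
      Finset.mem_erase.2 ⟨hk'b, Finset.mem_erase.2 ⟨hk'a, Finset.mem_univ k'⟩⟩
    have hWu : Wt q n v0 u k' = 0 := by
      apply Wt_zero
      show u k' ∉ Dlist v0 (padR u) k
      have : padR u k = u k' := by simp only [padR, dif_pos hkn]; rfl
      rw [← this]
      exact hkmem
    have hzero : (∏ j ∈ (Finset.univ.erase a).erase b, Wt q n v0 u j) = 0 :=
      Finset.prod_eq_zero hk'mem hWu
    rw [hzero]
    ring


end Stmt6

/-- the law of the `q`-shuffle of an inversion-free word `v_1 ≤ ⋯ ≤ v_n` is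
finitely `q`-exchangeable: swapping two adjacent letters of a word multiplies its probability
by `q ^ sgn(u_{i+1} - u_i)`.  Here `ξ_0, …, ξ_{n-1}` are independent, `ξ_j` having the
(0-indexed) truncated geometric law `P(ξ_j = i) = q^i/[n-j]_q` on `{0, …, n-j-1}`. -/
theorem stmt_6 (q : ℝ) (hq0 : 0 < q) (hq1 : q < 1) (n : ℕ) (hn : 1 ≤ n)
    (v : Fin n → ℝ) (hv : Monotone v)
    (Ω : Type*) [MeasurableSpace Ω] (P : Measure Ω) [IsProbabilityMeasure P]
    (ξ : ℕ → Ω → ℕ) (hmeas : ∀ j, Measurable (ξ j))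
    (hindep : iIndepFun ξ P)
    (hgeom : ∀ j < n, ∀ i : ℕ, P {ω | ξ j ω = i} =
      ENNReal.ofReal (if i < n - j then q ^ i / qInt q (n - j) else 0)) :
    ∀ (u : Fin n → ℝ) (i : ℕ) (h : i + 1 < n),
      (P.map (fun ω (m : Fin n) => qShuffleLetter (List.ofFn v) (fun t => ξ t ω) (m : ℕ)))
          {finSwap ⟨i, Nat.lt_of_succ_lt h⟩ ⟨i + 1, h⟩ u} =
        ENNReal.ofReal (q ^ ((SignType.sign (u ⟨i + 1, h⟩ - u ⟨i, Nat.lt_of_succ_lt h⟩)) : ℤ)) *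
          (P.map (fun ω (m : Fin n) => qShuffleLetter (List.ofFn v) (fun t => ξ t ω) (m : ℕ)))
            {u} := by
  intro u i h
  set a : Fin n := ⟨i, Nat.lt_of_succ_lt h⟩ with ha
  set b : Fin n := ⟨i + 1, h⟩ with hb
  have hab : a ≠ b := by simp [ha, hb, Fin.ext_iff]
  have hlen : (List.ofFn v).length = n := List.length_ofFn
  have hsort : (List.ofFn v).Pairwise (· ≤ ·) := hv.sortedLE_ofFn.pairwise
  have hlaw : ∀ w : Fin n → ℝ,
      (P.map (fun ω (m : Fin n) => qShuffleLetter (List.ofFn v) (fun t => ξ t ω) (m : ℕ))) {w}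
        = ∏ j : Fin n, Stmt6.Wt q n (List.ofFn v) w j :=
    fun w => Stmt6.law_eq q n v hv Ω P ξ hmeas hindep hgeom w
  rw [hlaw, hlaw]
  rcases lt_trichotomy (u a) (u b) with hlt | heq | hgt
  · have hs : SignType.sign (u b - u a) = 1 := sign_pos (sub_pos.2 hlt)
    rw [hs]
    simp only [SignType.coe_one, zpow_one]
    exact Stmt6.prod_swap_lt q hq0 n _ hsort hlen u i h hlt
  · rw [Stmt6.finSwap_eq_self heq, heq, sub_self, sign_zero]
    simp only [SignType.coe_zero, zpow_zero, ENNReal.ofReal_one, one_mul]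
  · have hasc : (finSwap a b u) ⟨i, Nat.lt_of_succ_lt h⟩ < (finSwap a b u) ⟨i + 1, h⟩ := by
      have e1 : (finSwap a b u) a = u b := by simp [finSwap]
      have e2 : (finSwap a b u) b = u a := by simp [finSwap, hab.symm]
      rw [show (⟨i, Nat.lt_of_succ_lt h⟩ : Fin n) = a from rfl,
        show (⟨i + 1, h⟩ : Fin n) = b from rfl, e1, e2]
      exact hgt
    have key := Stmt6.prod_swap_lt q hq0 n _ hsort hlen (finSwap a b u) i h hasc
    rw [show (⟨i, Nat.lt_of_succ_lt h⟩ : Fin n) = a from rfl,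
      show (⟨i + 1, h⟩ : Fin n) = b from rfl] at key
    rw [Stmt6.finSwap_invol] at key
    have hsgn : SignType.sign (u b - u a) = -1 := sign_neg (sub_neg.2 hgt)
    rw [hsgn, key, ← mul_assoc, ← ENNReal.ofReal_mul (by positivity)]
    have hq1' : q ^ (((-1 : SignType) : ℤ)) * q = 1 := by
      have hco : (((-1 : SignType)) : ℤ) = -1 := by simp
      rw [hco, zpow_neg_one, inv_mul_cancel₀ hq0.ne']
    rw [hq1', ENNReal.ofReal_one, one_mul]
end

section
/- The random permutation τ implementing the q-shuffle is distributed according to the Mallows measure: for every permutation σ of {1, ..., n}, P(τ = σ) = q^{inv(σ)}/[n]_q!, where inv(σ) = #{(i, j) : 1 ≤ i < j ≤ n, σ(i) > σ(j)} and [n]_q! = ∏_{j=1}^n (1 + q + ⋯ + q^{j−1}). -/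
open MeasureTheory ProbabilityTheory

/-- The random permutation implementing the `q`-shuffle of `{0, …, n-1}` (0-indexed):
`τ(j)` is the `x j`-th smallest element not yet chosen. -/
def qShuffleIndex (n : ℕ) (x : ℕ → ℕ) (j : ℕ) : ℕ :=
  (remWord (List.range n) x j).getD (x j) 0

/-- The number of inversions of a permutation. -/
def invPerm {n : ℕ} (σ : Equiv.Perm (Fin n)) : ℕ :=
  (Finset.univ.filter (fun p : Fin n × Fin n => p.1 < p.2 ∧ σ p.2 < σ p.1)).card

/-- The `q`-factorial `[n]_q! = [1]_q [2]_q ⋯ [n]_q`. -/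
def qFact (q : ℝ) (n : ℕ) : ℝ := ∏ j ∈ Finset.range n, qInt q (j + 1)

-- remaining word
def Lword (n : ℕ) (f : ℕ → ℕ) (j : ℕ) : List ℕ :=
  (List.range n).filter (fun m => decide (∀ t < j, f t ≠ m))

def cIdx (n : ℕ) (f : ℕ → ℕ) (j : ℕ) : ℕ :=
  ((Lword n f j).filter (fun m => decide (m < f j))).length

lemma mem_Lword {n : ℕ} {f : ℕ → ℕ} {j m : ℕ} :
    m ∈ Lword n f j ↔ m < n ∧ ∀ t < j, f t ≠ m := by
  simp [Lword, List.mem_filter, List.mem_range]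

lemma Lword_zero (n : ℕ) (f : ℕ → ℕ) : Lword n f 0 = List.range n := by
  simp [Lword]

lemma Lword_sorted (n : ℕ) (f : ℕ → ℕ) (j : ℕ) : (Lword n f j).Pairwise (· < ·) :=
  List.Pairwise.filter _ List.pairwise_lt_range

lemma Lword_nodup (n : ℕ) (f : ℕ → ℕ) (j : ℕ) : (Lword n f j).Nodup :=
  (Lword_sorted n f j).imp (fun h => Nat.ne_of_lt h)

lemma Lword_succ (n : ℕ) (f : ℕ → ℕ) (j : ℕ) :
    Lword n f (j + 1) = (Lword n f j).erase (f j) := by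
  rw [(Lword_nodup n f j).erase_eq_filter, Lword, Lword, List.filter_filter]
  apply List.filter_congr
  intro m _
  rw [Bool.eq_iff_iff]
  simp only [decide_eq_true_eq, Bool.and_eq_true, bne_iff_ne, ne_eq]
  constructor
  · intro h
    exact ⟨fun hh => h j (Nat.lt_succ_self j) hh.symm, fun t ht => h t (ht.trans (Nat.lt_succ_self j))⟩
  · rintro ⟨h2, h1⟩ t ht
    rcases Nat.lt_succ_iff_lt_or_eq.1 ht with ht' | rfl
    · exact h1 t ht'
    · exact fun hh => h2 hh.symm

section
variable {n : ℕ} {f : ℕ → ℕ}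

lemma f_mem_Lword (hfm : ∀ t < n, f t < n) (hfi : ∀ s < n, ∀ t < n, f s = f t → s = t)
    {j : ℕ} (hj : j < n) : f j ∈ Lword n f j := by
  rw [mem_Lword]
  exact ⟨hfm j hj, fun t ht hh => absurd (hfi t (ht.trans hj) j hj hh) (Nat.ne_of_lt ht)⟩

lemma Lword_length (hfm : ∀ t < n, f t < n) (hfi : ∀ s < n, ∀ t < n, f s = f t → s = t) :
    ∀ j ≤ n, (Lword n f j).length = n - j := by
  intro j
  induction j with
  | zero => intro _; simp [Lword_zero]
  | succ j ih =>
    intro hj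
    rw [Lword_succ, List.length_erase_of_mem (f_mem_Lword hfm hfi (Nat.lt_of_succ_le hj)),
      ih (Nat.le_of_succ_le hj)]
    omega

lemma sorted_getD_filter {l : List ℕ} (hl : l.Pairwise (· < ·)) {a : ℕ} (ha : a ∈ l) :
    (l.filter (fun m => decide (m < a))).length < l.length ∧
      l.getD (l.filter (fun m => decide (m < a))).length 0 = a := by
  induction l with
  | nil => simp at ha
  | cons b tl ih =>
    have hb : ∀ m ∈ tl, b < m := fun m hm => List.rel_of_pairwise_cons hl hm
    rcases List.mem_cons.1 ha with rfl | ha'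
    · have h1 : tl.filter (fun m => decide (m < a)) = [] := by
        rw [List.filter_eq_nil_iff]
        intro m hm
        simpa using (hb m hm).le
      simp [List.filter_cons, h1]
    · have hba : b < a := hb a ha'
      obtain ⟨ih1, ih2⟩ := ih (List.Pairwise.of_cons hl) ha'
      constructor
      · simpa [List.filter_cons, hba] using Nat.succ_lt_succ ih1
      · simpa [List.filter_cons, hba] using ih2

lemma cIdx_lt (hfm : ∀ t < n, f t < n) (hfi : ∀ s < n, ∀ t < n, f s = f t → s = t)
    {j : ℕ} (hj : j < n) : cIdx n f j < n - j := by
  have := (sorted_getD_filter (Lword_sorted n f j) (f_mem_Lword hfm hfi hj)).1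
  rwa [Lword_length hfm hfi j hj.le] at this

lemma getD_cIdx (hfm : ∀ t < n, f t < n) (hfi : ∀ s < n, ∀ t < n, f s = f t → s = t)
    {j : ℕ} (hj : j < n) : (Lword n f j).getD (cIdx n f j) 0 = f j :=
  (sorted_getD_filter (Lword_sorted n f j) (f_mem_Lword hfm hfi hj)).2

lemma remWord_eq (hfm : ∀ t < n, f t < n) (hfi : ∀ s < n, ∀ t < n, f s = f t → s = t)
    (x : ℕ → ℕ) : ∀ j ≤ n, (∀ t < j, x t = cIdx n f t) →
    remWord (List.range n) x j = Lword n f j := by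
  intro j
  induction j with
  | zero => intro _ _; rw [remWord, Lword_zero]
  | succ j ih =>
    intro hj hx
    have hjn : j < n := Nat.lt_of_succ_le hj
    rw [remWord, ih hjn.le (fun t ht => hx t (ht.trans (Nat.lt_succ_self j))),
      hx j (Nat.lt_succ_self j)]
    have hlt : cIdx n f j < (Lword n f j).length := by
      rw [Lword_length hfm hfi j hjn.le]; exact cIdx_lt hfm hfi hjn
    rw [← (Lword_nodup n f j).erase_getElem _ hlt]
    have hget : (Lword n f j)[cIdx n f j] = f j := by
      have := getD_cIdx hfm hfi hjn
      rwa [List.getD_eq_getElem _ _ hlt] at this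
    rw [hget, ← Lword_succ]

lemma qShuffle_of_cIdx (hfm : ∀ t < n, f t < n) (hfi : ∀ s < n, ∀ t < n, f s = f t → s = t)
    {x : ℕ → ℕ} (hx : ∀ t < n, x t = cIdx n f t) :
    ∀ j < n, qShuffleIndex n x j = f j := by
  intro j hj
  rw [qShuffleIndex, remWord_eq hfm hfi x j hj.le (fun t ht => hx t (ht.trans hj)), hx j hj]
  exact getD_cIdx hfm hfi hj

lemma x_eq_cIdx (hfm : ∀ t < n, f t < n) (hfi : ∀ s < n, ∀ t < n, f s = f t → s = t)
    {x : ℕ → ℕ} (hx : ∀ t < n, x t < n - t)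
    (hτ : ∀ j < n, qShuffleIndex n x j = f j) : ∀ j < n, x j = cIdx n f j := by
  intro j
  induction j using Nat.strong_induction_on with
  | _ j ih =>
    intro hj
    have hrem := remWord_eq hfm hfi x j hj.le (fun t ht => ih t ht (ht.trans hj))
    have hlen : (Lword n f j).length = n - j := Lword_length hfm hfi j hj.le
    have hxl : x j < (Lword n f j).length := by rw [hlen]; exact hx j hj
    have hcl : cIdx n f j < (Lword n f j).length := by rw [hlen]; exact cIdx_lt hfm hfi hj
    have h1 : (Lword n f j)[x j] = f j := by
      have := hτ j hj
      rwa [qShuffleIndex, hrem, List.getD_eq_getElem _ _ hxl] at this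
    have h2 : (Lword n f j)[cIdx n f j] = f j := by
      have := getD_cIdx hfm hfi hj
      rwa [List.getD_eq_getElem _ _ hcl] at this
    exact ((Lword_nodup n f j).getElem_inj_iff).1 (h1.trans h2.symm)

end

lemma range_toFinset (n : ℕ) : (List.range n).toFinset = Finset.range n := by
  ext m; simp

lemma cIdx_card {n : ℕ} (σ : Equiv.Perm (Fin n)) (a : Fin n) :
    cIdx n (fun t => if h : t < n then (σ ⟨t, h⟩ : ℕ) else n) (a : ℕ) =
      (Finset.univ.filter (fun k : Fin n => a < k ∧ σ k < σ a)).card := by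
  set f : ℕ → ℕ := fun t => if h : t < n then (σ ⟨t, h⟩ : ℕ) else n with hf
  have hpos : 0 < n := a.pos
  have hfa : f (a : ℕ) = (σ a : ℕ) := by simp [hf, a.isLt]
  have hnd : ((List.range n).filter
      (fun m => decide (m < f (a : ℕ)) && decide (∀ t < (a : ℕ), f t ≠ m))).Nodup :=
    List.nodup_range.filter _
  rw [cIdx, Lword, List.filter_filter, ← List.toFinset_card_of_nodup hnd,
    List.toFinset_filter, range_toFinset]
  have hmem : ∀ m, m ∈ (Finset.range n).filter
      (fun x => (decide (x < f (a : ℕ)) && decide (∀ t < (a : ℕ), f t ≠ x)) = true) ↔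
      m < n ∧ (∀ t < (a : ℕ), f t ≠ m) ∧ m < (σ a : ℕ) := by
    intro m
    simp only [Finset.mem_filter, Finset.mem_range, Bool.and_eq_true, decide_eq_true_eq, hfa]
    tauto
  apply Finset.card_nbij' (fun m => σ.symm ⟨m % n, Nat.mod_lt m hpos⟩) (fun k => (σ k : ℕ))
  · intro m hm
    rw [Finset.mem_coe, hmem] at hm
    obtain ⟨hmn, hun, hlt⟩ := hm
    have hmmod : m % n = m := Nat.mod_eq_of_lt hmn
    have hσk : σ (σ.symm ⟨m % n, Nat.mod_lt m hpos⟩) = ⟨m, hmn⟩ := by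
      rw [Equiv.apply_symm_apply]
      exact Fin.ext (by simpa using hmmod)
    simp only [Finset.mem_coe, Finset.mem_filter, Finset.mem_univ, true_and]
    refine ⟨?_, ?_⟩
    · rcases lt_trichotomy ((σ.symm ⟨m % n, Nat.mod_lt m hpos⟩ : Fin n) : ℕ) (a : ℕ) with h | h | h
      · exfalso
        apply hun _ h
        show f _ = m
        rw [hf]
        simp only []
        rw [dif_pos (Fin.is_lt _), Fin.eta, hσk]
      · exfalso
        have hka : σ.symm ⟨m % n, Nat.mod_lt m hpos⟩ = a := Fin.ext h
        rw [hka] at hσk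
        have h2 : (σ a : ℕ) = m := by rw [hσk]
        omega
      · exact Fin.lt_def.2 h
    · rw [hσk]
      exact Fin.lt_def.2 (by simpa using hlt)
  · intro k hk
    simp only [Finset.mem_coe, Finset.mem_filter, Finset.mem_univ, true_and] at hk
    obtain ⟨hak, hσ⟩ := hk
    rw [Finset.mem_coe, hmem]
    refine ⟨(σ k).isLt, ?_, Fin.lt_def.1 hσ⟩
    intro t ht hh
    have htn : t < n := ht.trans a.isLt
    rw [hf] at hh
    simp only [htn, dif_pos] at hh
    have : (⟨t, htn⟩ : Fin n) = k := σ.injective (Fin.ext hh)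
    have : (k : ℕ) = t := by rw [← this]
    omega
  · intro m hm
    rw [Finset.mem_coe, hmem] at hm
    have hmmod : m % n = m := Nat.mod_eq_of_lt hm.1
    simp [Equiv.apply_symm_apply, hmmod]
  · intro k hk
    have : (σ k : ℕ) % n = (σ k : ℕ) := Nat.mod_eq_of_lt (σ k).isLt
    simp [this]

lemma invPerm_eq_sum {n : ℕ} (σ : Equiv.Perm (Fin n)) :
    invPerm σ = ∑ j ∈ Finset.range n,
      cIdx n (fun t => if h : t < n then (σ ⟨t, h⟩ : ℕ) else n) j := by
  rw [← Fin.sum_univ_eq_sum_range, invPerm,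
    Finset.card_eq_sum_card_fiberwise (f := Prod.fst) (t := Finset.univ)
      (fun x _ => Finset.mem_univ _)]
  apply Finset.sum_congr rfl
  intro a _
  rw [cIdx_card σ a]
  apply Finset.card_nbij' (fun p => p.2) (fun k => (a, k))
  · rintro ⟨u, v⟩ h
    simp only [Finset.mem_coe, Finset.mem_filter, Finset.mem_univ, true_and] at h ⊢
    obtain ⟨⟨h1, h2⟩, h3⟩ := h
    subst h3
    exact ⟨h1, h2⟩
  · intro k hk
    simp only [Finset.mem_coe, Finset.mem_filter, Finset.mem_univ, true_and] at hk ⊢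
    exact ⟨⟨hk.1, hk.2⟩, trivial⟩
  · rintro ⟨u, v⟩ h
    simp only [Finset.mem_coe, Finset.mem_filter, Finset.mem_univ, true_and] at h
    obtain ⟨_, h3⟩ := h
    subst h3
    rfl
  · intro k _
    rfl

/-- the random permutation `τ` implementing the `q`-shuffle has the Mallows
distribution: `P(τ = σ) = q^{inv σ}/[n]_q!`. Here `ξ_0, …, ξ_{n-1}` are independent, `ξ_j`
having the (0-indexed) truncated geometric law `P(ξ_j = i) = q^i/[n-j]_q` on `{0, …, n-j-1}`. -/
theorem stmt_7 (q : ℝ) (hq0 : 0 < q) (hq1 : q < 1) (n : ℕ) (hn : 1 ≤ n)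
    (Ω : Type*) [MeasurableSpace Ω] (P : Measure Ω) [IsProbabilityMeasure P]
    (ξ : ℕ → Ω → ℕ) (hmeas : ∀ j, Measurable (ξ j))
    (hindep : iIndepFun ξ P)
    (hgeom : ∀ j < n, ∀ i : ℕ, P {ω | ξ j ω = i} =
      ENNReal.ofReal (if i < n - j then q ^ i / qInt q (n - j) else 0))
    (σ : Equiv.Perm (Fin n)) :
    P {ω | ∀ j : Fin n, qShuffleIndex n (fun t => ξ t ω) (j : ℕ) = (σ j : ℕ)} =
      ENNReal.ofReal (q ^ invPerm σ / qFact q n) := by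
  classical
  set f : ℕ → ℕ := fun t => if h : t < n then (σ ⟨t, h⟩ : ℕ) else n with hfdef
  have hfm : ∀ t < n, f t < n := by
    intro t ht
    simp [hfdef, ht, Fin.is_lt]
  have hfi : ∀ s < n, ∀ t < n, f s = f t → s = t := by
    intro s hs t ht h
    simp only [hfdef, dif_pos hs, dif_pos ht] at h
    have h2 : (⟨s, hs⟩ : Fin n) = ⟨t, ht⟩ := σ.injective (Fin.ext h)
    exact congrArg Fin.val h2
  have hfσ : ∀ j : Fin n, f (j : ℕ) = (σ j : ℕ) := by
    intro j
    simp [hfdef, j.isLt]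
  set c : ℕ → ℕ := fun j => cIdx n f j with hcdef
  set E := {ω | ∀ j : Fin n, qShuffleIndex n (fun t => ξ t ω) (j : ℕ) = (σ j : ℕ)} with hE
  set A := ⋂ j ∈ Finset.range n, ξ j ⁻¹' {c j} with hA
  set N := ⋃ (j : ℕ), ⋃ (_ : j < n), ⋃ (i : ℕ), {ω | ξ j ω = (n - j) + i} with hN
  have hNnull : P N = 0 := by
    refine measure_iUnion_null fun j => measure_iUnion_null fun hj =>
      measure_iUnion_null fun i => ?_
    rw [hgeom j hj ((n - j) + i)]
    have hc : ¬ ((n - j) + i < n - j) := by omega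
    simp [hc]
  have hAE : A ⊆ E := by
    intro ω hω
    simp only [hA, Set.mem_iInter, Set.mem_preimage, Set.mem_singleton_iff,
      Finset.mem_range] at hω
    intro j
    rw [qShuffle_of_cIdx hfm hfi (x := fun t => ξ t ω) (fun t ht => hω t ht) (j : ℕ) j.isLt]
    exact hfσ j
  have hEA : E ⊆ A ∪ N := by
    intro ω hω
    by_cases hx : ∀ t < n, ξ t ω < n - t
    · left
      have hτ : ∀ j < n, qShuffleIndex n (fun t => ξ t ω) j = f j := by
        intro j hj
        have := hω ⟨j, hj⟩
        rw [this]
        exact (hfσ ⟨j, hj⟩).symm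
      have hxc := x_eq_cIdx hfm hfi hx hτ
      simp only [hA, Set.mem_iInter, Set.mem_preimage, Set.mem_singleton_iff,
        Finset.mem_range]
      exact fun j hj => hxc j hj
    · right
      push_neg at hx
      obtain ⟨t, ht, hge⟩ := hx
      refine Set.mem_iUnion.2 ⟨t, Set.mem_iUnion.2 ⟨ht,
        Set.mem_iUnion.2 ⟨ξ t ω - (n - t), ?_⟩⟩⟩
      simp only [Set.mem_setOf_eq]
      omega
  have hPE : P E = P A := by
    refine le_antisymm ?_ (measure_mono hAE)
    calc P E ≤ P (A ∪ N) := measure_mono hEA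
      _ ≤ P A + P N := measure_union_le _ _
      _ = P A := by rw [hNnull, add_zero]
  have hPA : P A = ∏ j ∈ Finset.range n, P (ξ j ⁻¹' {c j}) :=
    hindep.meas_biInter (fun j _ => ⟨{c j}, measurableSet_singleton _, rfl⟩)
  have hqint : ∀ m : ℕ, 1 ≤ m → 0 < qInt q m := by
    intro m hm
    refine Finset.sum_pos (fun i _ => pow_pos hq0 i) ?_
    rw [Finset.nonempty_range_iff]
    omega
  have hfactor : ∀ j < n, P (ξ j ⁻¹' {c j}) = ENNReal.ofReal (q ^ c j / qInt q (n - j)) := by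
    intro j hj
    have h1 : (ξ j ⁻¹' {c j}) = {ω | ξ j ω = c j} := rfl
    rw [h1, hgeom j hj (c j), if_pos (cIdx_lt hfm hfi hj)]
  have hprodR : ∏ j ∈ Finset.range n, (q ^ c j / qInt q (n - j))
      = q ^ invPerm σ / qFact q n := by
    rw [Finset.prod_div_distrib, Finset.prod_pow_eq_pow_sum, hcdef]
    rw [← invPerm_eq_sum σ]
    congr 1
    rw [qFact, ← Finset.prod_range_reflect (fun j => qInt q (j + 1)) n]
    refine Finset.prod_congr rfl fun j hj => ?_
    rw [Finset.mem_range] at hj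
    congr 1
    omega
  rw [hPE, hPA]
  rw [Finset.prod_congr rfl fun j hj => hfactor j (Finset.mem_range.1 hj)]
  rw [← ENNReal.ofReal_prod_of_nonneg]
  · rw [hprodR]
  · intro j hj
    rw [Finset.mem_range] at hj
    exact div_nonneg (pow_nonneg hq0.le _) (hqint (n - j) (by omega)).le
end
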